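/- arXiv:1902.01997 — 3 statements merged into one kernel-verified Lean document; each statement's English description precedes it below -/
import Mathlib

section
/- Let B be a connected mutation-finite real quiver of rank 3. Then every weight of B is of the form 2cos(πm/d) for some integers d ≥ 1 and 0 ≤ m ≤ d/2; that is, for all i≠j there exist integers d ≥ 1 and 0 ≤ m ≤ d/2 with |b_ij| = 2cos(πm/d). -/
open Real

noncomputable section

namespace RealQuiver

variable {n : ℕ}

/-- Mutation of a real quiver (a skew-symmetric real matrix) at vertex `k`. -/
def mutate (B : Matrix (Fin n) (Fin n) ℝ) (k : Fin n) : Matrix (Fin n) (Fin n) ℝ :=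
  fun i j => if i = k ∨ j = k then -B i j
    else B i j + (|B i k| * B k j + B i k * |B k j|) / 2

/-- One mutation step. -/
def MutStep (B C : Matrix (Fin n) (Fin n) ℝ) : Prop := ∃ k, C = mutate B k

/-- `C` is obtained from `B` by a finite sequence of mutations. -/
def Reachable (B C : Matrix (Fin n) (Fin n) ℝ) : Prop :=
  Relation.ReflTransGen MutStep B C

/-- `B` is mutation-finite. -/
def MutationFinite (B : Matrix (Fin n) (Fin n) ℝ) : Prop :=
  {C | Reachable B C}.Finite

/-- Simultaneous permutation of the indices of `B`. -/
def permute (B : Matrix (Fin n) (Fin n) ℝ) (σ : Equiv.Perm (Fin n)) :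
    Matrix (Fin n) (Fin n) ℝ := fun i j => B (σ i) (σ j)

/-- Mutation-equivalence: a finite sequence of mutations followed by a
simultaneous permutation of the indices. -/
def MutEquiv (B C : Matrix (Fin n) (Fin n) ℝ) : Prop :=
  ∃ C' σ, Reachable B C' ∧ C = permute C' σ

/-- The underlying (undirected) graph of a quiver. -/
def toGraph (B : Matrix (Fin n) (Fin n) ℝ) : SimpleGraph (Fin n) where
  Adj i j := i ≠ j ∧ (B i j ≠ 0 ∨ B j i ≠ 0)
  symm := ⟨fun i j h => ⟨h.1.symm, h.2.symm⟩⟩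
  loopless := ⟨fun i h => h.1 rfl⟩

/-- Connectedness of a quiver. -/
def Connected (B : Matrix (Fin n) (Fin n) ℝ) : Prop := (toGraph B).Connected

def IsSkewSymmetric (B : Matrix (Fin n) (Fin n) ℝ) : Prop :=
  ∀ i j, B j i = -B i j

/-- A quiver is cyclic if its directed graph (an arrow `i → j` whenever
`B i j > 0`) contains a directed cycle. -/
def Cyclic (B : Matrix (Fin n) (Fin n) ℝ) : Prop :=
  ∃ i, Relation.TransGen (fun a b => 0 < B a b) i i

def Acyclic (B : Matrix (Fin n) (Fin n) ℝ) : Prop := ¬ Cyclic B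

/-- The rank-3 cyclic quiver `(a,b,c)`: `b₁₂ = a`, `b₂₃ = b`, `b₃₁ = c`. -/
def cyclicQ (a b c : ℝ) : Matrix (Fin 3) (Fin 3) ℝ :=
  !![0, a, -c; -a, 0, b; c, -b, 0]

/-- The rank-3 acyclic quiver `(a,b,-c)`: `b₁₂ = a`, `b₂₃ = b`, `b₁₃ = c`. -/
def acyclicQ (a b c : ℝ) : Matrix (Fin 3) (Fin 3) ℝ :=
  !![0, a, c; -a, 0, b; -c, -b, 0]

/-- `d` is the highest denominator of the mutation class of `B`. -/
def HighestDenom (B : Matrix (Fin n) (Fin n) ℝ) (d : ℕ) : Prop :=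
  (∀ C, MutEquiv B C → ∀ i j, i ≠ j →
    C i j = 0 ∨ ∃ p q : ℕ, 2 * p < q ∧ q ≤ d ∧ |C i j| = 2 * Real.cos (π * p / q)) ∧
  (∃ C, MutEquiv B C ∧ ∃ i j, ∃ p : ℕ, 0 < p ∧ 2 * p < d ∧ Nat.gcd p d = 1 ∧
    |C i j| = 2 * Real.cos (π * p / d))

/-- The rank-4 quiver `L n` (even denominator `d = 2n`):
`b₁₂ = b₂₃ = 2cos(π/2n)`, `b₃₁ = 2`, `b₁₄ = b₄₃ = 2cos(π(n-1)/2n)`, `b₂₄ = 0`. -/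
def Lq (n : ℕ) : Matrix (Fin 4) (Fin 4) ℝ :=
  !![0, 2 * Real.cos (π / (2 * n)), -2, 2 * Real.cos (π * ((n : ℝ) - 1) / (2 * n));
     -(2 * Real.cos (π / (2 * n))), 0, 2 * Real.cos (π / (2 * n)), 0;
     2, -(2 * Real.cos (π / (2 * n))), 0, -(2 * Real.cos (π * ((n : ℝ) - 1) / (2 * n)));
     -(2 * Real.cos (π * ((n : ℝ) - 1) / (2 * n))), 0, 2 * Real.cos (π * ((n : ℝ) - 1) / (2 * n)), 0]

/-- The rank-4 quiver `M n` (even denominator `d = 2n`):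
`b₁₂ = b₂₃ = 2cos(π/2n)`, `b₃₁ = 2`, `b₂₄ = 2cos(π(n-1)/2n)`, `b₁₄ = b₃₄ = 0`. -/
def Mq (n : ℕ) : Matrix (Fin 4) (Fin 4) ℝ :=
  !![0, 2 * Real.cos (π / (2 * n)), -2, 0;
     -(2 * Real.cos (π / (2 * n))), 0, 2 * Real.cos (π / (2 * n)), 2 * Real.cos (π * ((n : ℝ) - 1) / (2 * n));
     2, -(2 * Real.cos (π / (2 * n))), 0, 0;
     0, -(2 * Real.cos (π * ((n : ℝ) - 1) / (2 * n))), 0, 0]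

/-- The rank-4 quiver `O n` (odd denominator `d = 2n+1`):
`b₁₂ = b₂₃ = 2cos(π/d)`, `b₃₁ = 2`, `b₁₄ = b₂₄ = b₄₃ = 2cos(πn/d)`. -/
def Oq (n : ℕ) : Matrix (Fin 4) (Fin 4) ℝ :=
  !![0, 2 * Real.cos (π / (2 * n + 1)), -2, 2 * Real.cos (π * n / (2 * n + 1));
     -(2 * Real.cos (π / (2 * n + 1))), 0, 2 * Real.cos (π / (2 * n + 1)), 2 * Real.cos (π * n / (2 * n + 1));
     2, -(2 * Real.cos (π / (2 * n + 1))), 0, -(2 * Real.cos (π * n / (2 * n + 1)));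
     -(2 * Real.cos (π * n / (2 * n + 1))), -(2 * Real.cos (π * n / (2 * n + 1))), 2 * Real.cos (π * n / (2 * n + 1)), 0]

/-- folded mutation dynamics -/
def Amap (t : ℝ) (s : ℝ × ℝ) : ℝ × ℝ := (s.1, -s.2 - t * min s.1 0)
def Bmap (t : ℝ) (s : ℝ × ℝ) : ℝ × ℝ := (-s.1 - t * max s.2 0, s.2)

/-- piecewise chart -/
def phiC (ξ : ℂ) (s : ℝ × ℝ) : ℂ :=
  (s.1 : ℂ) + (if 0 < s.1 ∧ s.2 < 0 then (-s.2 : ℝ) else (s.2 : ℝ)) * ξ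

section branch
variable {t : ℝ} {ξ η : ℂ}

lemma LA1 (hmul : ξ * η = 1) (hadd : ξ + η = (t : ℂ)) (s : ℝ × ℝ) (h : s.1 ≤ 0) :
    phiC ξ (Amap t s) = -ξ^2 * phiC η s := by
  obtain ⟨u, v⟩ := s
  simp only [Amap, phiC] at *
  have hmin : min u 0 = u := min_eq_left h
  simp only [hmin]
  have h1 : ¬ (0 < u ∧ (-v - t*u) < 0) := by rintro ⟨h1, -⟩; linarith
  have h2 : ¬ (0 < u ∧ v < 0) := by rintro ⟨h1, -⟩; linarith
  rw [if_neg h1, if_neg h2]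
  push_cast
  linear_combination ((v:ℂ)*ξ - (u:ℂ)) * hmul + (u:ℂ)*ξ * hadd

lemma LA2 (s : ℝ × ℝ) (h : 0 < s.1) :
    phiC ξ (Amap t s) = phiC ξ s := by
  obtain ⟨u, v⟩ := s
  simp only [Amap, phiC] at *
  have hmin : min u 0 = 0 := min_eq_right h.le
  simp only [hmin]
  rcases lt_trichotomy v 0 with hv | hv | hv
  · rw [if_neg (by rintro ⟨-, h2⟩; linarith), if_pos ⟨h, hv⟩]
    push_cast; ring
  · subst hv; norm_num
  · rw [if_pos ⟨h, by linarith⟩, if_neg (by rintro ⟨-, h2⟩; linarith)]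
    push_cast; ring

lemma LB1 (hadd : ξ + η = (t : ℂ)) (s : ℝ × ℝ) (h : 0 ≤ s.2) :
    phiC ξ (Bmap t s) = -phiC η s := by
  obtain ⟨u, v⟩ := s
  simp only [Bmap, phiC] at *
  have hmax : max v 0 = v := max_eq_left h
  simp only [hmax]
  have h1 : ¬ ((0:ℝ) < -u - t*v ∧ v < 0) := by rintro ⟨-, h2⟩; linarith
  have h2 : ¬ (0 < u ∧ v < 0) := by rintro ⟨-, h2⟩; linarith
  rw [if_neg h1, if_neg h2]
  push_cast
  linear_combination (v:ℂ) * hadd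

lemma LB2 (s : ℝ × ℝ) (h : s.2 < 0) (hu : s.1 ≠ 0) :
    phiC ξ (Bmap t s) = -phiC ξ s := by
  obtain ⟨u, v⟩ := s
  simp only [Bmap, phiC] at *
  have hmax : max v 0 = 0 := max_eq_right h.le
  simp only [hmax]
  rcases hu.lt_or_gt with hu | hu
  · rw [if_pos ⟨by linarith, h⟩, if_neg (by rintro ⟨h1, -⟩; linarith)]
    push_cast; ring
  · rw [if_neg (by rintro ⟨h1, -⟩; linarith), if_pos ⟨hu, h⟩]
    push_cast; ring

end branch

section master
variable {t : ℝ} {ξ η : ℂ} {S : Set (ℝ × ℝ)}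

lemma K1 (hmul : ξ * η = 1) (hadd : ξ + η = (t : ℂ))
    (hA : ∀ s ∈ S, Amap t s ∈ S) (hB : ∀ s ∈ S, Bmap t s ∈ S)
    (s : ℝ × ℝ) (hs : s ∈ S) :
    ∃ s' ∈ S, ∃ c : ℂ, (c = 1 ∨ c = -1) ∧
      phiC ξ s' = c * phiC η s ∧ phiC η s' = c * phiC ξ s := by
  have hmul' : η * ξ = 1 := by rwa [mul_comm]
  have hadd' : η + ξ = (t : ℂ) := by rwa [add_comm]
  rcases le_or_gt 0 s.2 with hv | hv
  · exact ⟨Bmap t s, hB s hs, -1, Or.inr rfl, by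
      rw [LB1 hadd s hv]; ring, by rw [LB1 hadd' s hv]; ring⟩
  · rcases lt_trichotomy s.1 0 with hu | hu | hu
    · -- word B A B
      have h1 : Bmap t s = (-s.1, s.2) := by
        simp [Bmap, max_eq_right hv.le]
      have h2 : Amap t (Bmap t s) = (-s.1, -s.2) := by
        simp [h1, Amap, min_eq_right (by linarith : (0:ℝ) ≤ -s.1)]
      refine ⟨Bmap t (Amap t (Bmap t s)), hB _ (hA _ (hB _ hs)), 1, Or.inl rfl, ?_, ?_⟩
      · rw [LB1 hadd _ (by rw [h2]; dsimp; linarith),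
          LA2 _ (by rw [h1]; dsimp; linarith),
          LB2 s hv (by intro h; rw [h] at hu; exact lt_irrefl _ hu)]
        ring
      · rw [LB1 hadd' _ (by rw [h2]; dsimp; linarith),
          LA2 _ (by rw [h1]; dsimp; linarith),
          LB2 s hv (by intro h; rw [h] at hu; exact lt_irrefl _ hu)]
        ring
    · -- s.1 = 0, word A B
      have h1 : Amap t s = (0, -s.2) := by
        simp [Amap, hu]
      refine ⟨Bmap t (Amap t s), hB _ (hA _ hs), 1, Or.inl rfl, ?_, ?_⟩
      · rw [LB1 hadd _ (by rw [h1]; dsimp; linarith), LA1 hmul' hadd' s hu.le]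
        have : phiC ξ s = (s.2 : ℂ) * ξ := by
          simp [phiC, hu]
        have h2 : phiC η s = (s.2 : ℂ) * η := by
          simp [phiC, hu]
        rw [this, h2]; linear_combination (s.2 : ℂ) * η * hmul
      · rw [LB1 hadd' _ (by rw [h1]; dsimp; linarith), LA1 hmul hadd s hu.le]
        have : phiC ξ s = (s.2 : ℂ) * ξ := by
          simp [phiC, hu]
        have h2 : phiC η s = (s.2 : ℂ) * η := by
          simp [phiC, hu]
        rw [this, h2]; linear_combination (s.2 : ℂ) * ξ * hmul
    · -- 0 < s.1, word A B
      have h1 : Amap t s = (s.1, -s.2) := by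
        simp [Amap, min_eq_right hu.le]
      refine ⟨Bmap t (Amap t s), hB _ (hA _ hs), -1, Or.inr rfl, ?_, ?_⟩
      · rw [LB1 hadd _ (by rw [h1]; dsimp; linarith), LA2 s hu]; ring
      · rw [LB1 hadd' _ (by rw [h1]; dsimp; linarith), LA2 s hu]; ring

lemma K2' (hmul : ξ * η = 1) (hadd : ξ + η = (t : ℂ))
    (hA : ∀ s ∈ S, Amap t s ∈ S) (hB : ∀ s ∈ S, Bmap t s ∈ S)
    (s : ℝ × ℝ) (hs : s ∈ S) :
    ∃ s' ∈ S, ∃ c : ℂ, (c = 1 ∨ c = -1) ∧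
      phiC ξ s' = c * ξ^2 * phiC η s ∧ phiC η s' = c * η^2 * phiC ξ s := by
  have hmul' : η * ξ = 1 := by rwa [mul_comm]
  have hadd' : η + ξ = (t : ℂ) := by rwa [add_comm]
  rcases le_or_gt s.1 0 with hu | hu
  · exact ⟨Amap t s, hA s hs, -1, Or.inr rfl, by
      rw [LA1 hmul hadd s hu]; ring, by rw [LA1 hmul' hadd' s hu]; ring⟩
  · rcases lt_trichotomy s.2 0 with hv | hv | hv
    · -- 0 < s.1, s.2 < 0 : word B A
      have h1 : Bmap t s = (-s.1, s.2) := by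
        simp [Bmap, max_eq_right hv.le]
      refine ⟨Amap t (Bmap t s), hA _ (hB _ hs), 1, Or.inl rfl, ?_, ?_⟩
      · rw [LA1 hmul hadd _ (by rw [h1]; dsimp; linarith),
          LB2 s hv (ne_of_gt hu)]; ring
      · rw [LA1 hmul' hadd' _ (by rw [h1]; dsimp; linarith),
          LB2 s hv (ne_of_gt hu)]; ring
    · -- s.2 = 0 : word B A
      have h1 : Bmap t s = (-s.1, 0) := by
        simp [Bmap, hv]
      have hz : phiC ξ s = phiC η s := by
        simp [phiC, hv]
      refine ⟨Amap t (Bmap t s), hA _ (hB _ hs), 1, Or.inl rfl, ?_, ?_⟩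
      · rw [LA1 hmul hadd _ (by rw [h1]; dsimp; linarith),
          LB1 hadd' s hv.ge, hz]; ring
      · rw [LA1 hmul' hadd' _ (by rw [h1]; dsimp; linarith),
          LB1 hadd s hv.ge, hz]; ring
    · -- 0 < s.1, 0 < s.2 : word A B A
      have h1 : Amap t s = (s.1, -s.2) := by
        simp [Amap, min_eq_right hu.le]
      have h2 : Bmap t (Amap t s) = (-s.1, -s.2) := by
        simp [h1, Bmap, max_eq_right (by linarith : -s.2 ≤ 0)]
      refine ⟨Amap t (Bmap t (Amap t s)), hA _ (hB _ (hA _ hs)), 1, Or.inl rfl, ?_, ?_⟩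
      · rw [LA1 hmul hadd _ (by rw [h2]; dsimp; linarith),
          LB2 _ (by rw [h1]; dsimp; linarith) (by rw [h1]; dsimp; exact ne_of_gt hu),
          LA2 s hu]
        ring
      · rw [LA1 hmul' hadd' _ (by rw [h2]; dsimp; linarith),
          LB2 _ (by rw [h1]; dsimp; linarith) (by rw [h1]; dsimp; exact ne_of_gt hu),
          LA2 s hu]
        ring

lemma K2 (hmul : ξ * η = 1) (hadd : ξ + η = (t : ℂ))
    (hA : ∀ s ∈ S, Amap t s ∈ S) (hB : ∀ s ∈ S, Bmap t s ∈ S)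
    (s : ℝ × ℝ) (hs : s ∈ S) :
    ∃ s' ∈ S, ∃ c : ℂ, (c = 1 ∨ c = -1) ∧
      phiC ξ s' = c * ξ^2 * phiC ξ s ∧ phiC η s' = c * η^2 * phiC η s := by
  obtain ⟨s₁, hs₁, c₁, hc₁, e₁, e₁'⟩ := K1 hmul hadd hA hB s hs
  obtain ⟨s₂, hs₂, c₂, hc₂, e₂, e₂'⟩ := K2' hmul hadd hA hB s₁ hs₁
  refine ⟨s₂, hs₂, c₁ * c₂, ?_, ?_, ?_⟩
  · rcases hc₁ with h | h <;> rcases hc₂ with h' | h' <;> simp [h, h']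
  · rw [e₂, e₁']; ring
  · rw [e₂', e₁]; ring

lemma Kiter (hmul : ξ * η = 1) (hadd : ξ + η = (t : ℂ))
    (hA : ∀ s ∈ S, Amap t s ∈ S) (hB : ∀ s ∈ S, Bmap t s ∈ S)
    (s₀ : ℝ × ℝ) (hs₀ : s₀ ∈ S) (n : ℕ) :
    ∃ s' ∈ S, ∃ c : ℂ, (c = 1 ∨ c = -1) ∧
      phiC ξ s' = c * ξ^(2*n) * phiC ξ s₀ ∧ phiC η s' = c * η^(2*n) * phiC η s₀ := by
  induction n with
  | zero => exact ⟨s₀, hs₀, 1, Or.inl rfl, by simp, by simp⟩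
  | succ n ih =>
    obtain ⟨s₁, hs₁, c₁, hc₁, e₁, e₁'⟩ := ih
    obtain ⟨s₂, hs₂, c₂, hc₂, e₂, e₂'⟩ := K2 hmul hadd hA hB s₁ hs₁
    refine ⟨s₂, hs₂, c₁ * c₂, ?_, ?_, ?_⟩
    · rcases hc₁ with h | h <;> rcases hc₂ with h' | h' <;> simp [h, h']
    · rw [e₂, e₁]; ring
    · rw [e₂', e₁']; ring

theorem master (hmul : ξ * η = 1) (hadd : ξ + η = (t : ℂ)) (hne : ξ ≠ η)
    (hfin : S.Finite)
    (hA : ∀ s ∈ S, Amap t s ∈ S) (hB : ∀ s ∈ S, Bmap t s ∈ S)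
    (s₀ : ℝ × ℝ) (hs₀ : s₀ ∈ S) (hs₀0 : s₀ ≠ 0) :
    ∃ N : ℕ, 1 ≤ N ∧ ξ^(4*N) = 1 := by
  classical
  choose g hgS c hc e e' using Kiter hmul hadd hA hB s₀ hs₀
  have hfinS : Finite ↥S := hfin.to_subtype
  obtain ⟨a, b, hab, heq⟩ := Finite.exists_ne_map_eq_of_infinite
    (fun n : ℕ => (⟨g n, hgS n⟩ : ↥S))
  wlog hlt : a < b generalizing a b
  · exact this b a hab.symm heq.symm ((hab.lt_or_gt).resolve_left hlt)
  have hg : g a = g b := congrArg Subtype.val heq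
  have hξ0 : ξ ≠ 0 := by
    intro h; rw [h, zero_mul] at hmul; exact zero_ne_one hmul
  have hη0 : η ≠ 0 := by
    intro h; rw [h, mul_zero] at hmul; exact zero_ne_one hmul
  have hcc : ∀ m, c m * c m = 1 := by
    intro m; rcases hc m with h | h <;> simp [h]
  refine ⟨b - a, by omega, ?_⟩
  -- not both phiC ξ s₀ and phiC η s₀ are zero
  have hkey : phiC ξ s₀ ≠ 0 ∨ phiC η s₀ ≠ 0 := by
    by_contra h
    push_neg at h
    obtain ⟨h1, h2⟩ := h
    apply hs₀0
    set w : ℝ := if 0 < s₀.1 ∧ s₀.2 < 0 then (-s₀.2 : ℝ) else (s₀.2 : ℝ) with hw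
    have e1 : (s₀.1 : ℂ) + (w : ℂ) * ξ = 0 := h1
    have e2 : (s₀.1 : ℂ) + (w : ℂ) * η = 0 := h2
    have hwc : (w : ℂ) * (ξ - η) = 0 := by linear_combination e1 - e2
    have hw0 : (w : ℂ) = 0 := by
      rcases mul_eq_zero.mp hwc with h | h
      · exact h
      · exact absurd (sub_eq_zero.mp h) hne
    have hw0' : w = 0 := by exact_mod_cast hw0
    have hu0 : s₀.1 = 0 := by
      have : (s₀.1 : ℂ) = 0 := by rw [hw0, zero_mul, add_zero] at e1; exact e1
      exact_mod_cast this
    have hv0 : s₀.2 = 0 := by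
      by_cases hcond : 0 < s₀.1 ∧ s₀.2 < 0
      · have h3 : w = -s₀.2 := by rw [hw, if_pos hcond]
        linarith [hw0' ▸ h3]
      · have h3 : w = s₀.2 := by rw [hw, if_neg hcond]
        rw [← h3, hw0']
    exact Prod.ext hu0 hv0
  have main : ∀ (ζ : ℂ), ζ ≠ 0 → phiC ζ s₀ ≠ 0 →
      (∀ m, phiC ζ (g m) = c m * ζ^(2*m) * phiC ζ s₀) → ζ^(4*(b-a)) = 1 := by
    intro ζ hζ0 hz he
    have h1 : c a * ζ^(2*a) * phiC ζ s₀ = c b * ζ^(2*b) * phiC ζ s₀ := by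
      rw [← he a, ← he b, hg]
    have h2 : c a * ζ^(2*a) = c b * ζ^(2*b) := mul_right_cancel₀ hz h1
    have h3 : ζ^(2*b) = ζ^(2*a) * ζ^(2*(b-a)) := by
      rw [← pow_add]; congr 1; omega
    have h4 : c a = c b * ζ^(2*(b-a)) := by
      have hpa : ζ^(2*a) ≠ 0 := pow_ne_zero _ hζ0
      apply mul_left_cancel₀ hpa
      calc ζ^(2*a) * c a = c a * ζ^(2*a) := by ring
        _ = c b * ζ^(2*b) := h2
        _ = ζ^(2*a) * (c b * ζ^(2*(b-a))) := by rw [h3]; ring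
    calc ζ^(4*(b-a)) = (c b * ζ^(2*(b-a))) * (c b * ζ^(2*(b-a))) / (c b * c b) := by
          rw [show 4*(b-a) = 2*(b-a) + 2*(b-a) by ring, pow_add]
          rcases hc b with h | h <;> rw [h] <;> ring
      _ = (c a * c a) / (c b * c b) := by rw [← h4]
      _ = 1 := by rw [hcc, hcc]; norm_num
  rcases hkey with hz | hz
  · exact main ξ hξ0 hz e
  · have : η^(4*(b-a)) = 1 := main η hη0 hz e'
    have hmm : (ξ*η)^(4*(b-a)) = 1 := by rw [hmul, one_pow]
    rw [mul_pow, this, mul_one] at hmm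
    exact hmm

end master

section form

lemma weight_form {t : ℝ} (ht : 0 ≤ t) {S : Set (ℝ × ℝ)} (hfin : S.Finite)
    (hA : ∀ s ∈ S, Amap t s ∈ S) (hB : ∀ s ∈ S, Bmap t s ∈ S)
    (s₀ : ℝ × ℝ) (hs₀ : s₀ ∈ S) (hs₀0 : s₀ ≠ 0) :
    ∃ d m : ℕ, 1 ≤ d ∧ 2 * m ≤ d ∧ t = 2 * Real.cos (π * m / d) := by
  rcases eq_or_lt_of_le ht with h0 | h0
  · refine ⟨2, 1, by norm_num, by norm_num, ?_⟩
    rw [show (π * (1:ℕ) / (2:ℕ) : ℝ) = π / 2 by push_cast; ring, Real.cos_pi_div_two, ← h0]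
    ring
  rcases lt_trichotomy t 2 with h2 | h2 | h2
  · -- elliptic case
    set θ := Real.arccos (t / 2) with hθ
    have hmem1 : (-1 : ℝ) ≤ t / 2 := by linarith
    have hmem2 : t / 2 ≤ 1 := by linarith
    have hcosθ : Real.cos θ = t / 2 := Real.cos_arccos hmem1 hmem2
    have hθpos : 0 < θ := Real.arccos_pos.2 (by linarith)
    have hθlt : θ < π / 2 := by
      rw [hθ, Real.arccos_eq_pi_div_two_sub_arcsin]
      have : 0 < Real.arcsin (t / 2) := Real.arcsin_pos.2 (by linarith)
      linarith
    set ξ := Complex.exp (θ * Complex.I) with hξ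
    set η := Complex.exp (-θ * Complex.I) with hη
    have hmul : ξ * η = 1 := by
      rw [hξ, hη, ← Complex.exp_add]
      norm_num
    have hadd : ξ + η = (t : ℂ) := by
      have hc : Complex.cos θ = (Complex.exp (-θ * Complex.I) + Complex.exp (θ * Complex.I)) / 2 := by
        rw [Complex.cos]
        ring_nf
      have hoc : ((Real.cos θ : ℝ) : ℂ) = Complex.cos (θ : ℂ) := Complex.ofReal_cos θ
      rw [hξ, hη]
      have : ((t : ℝ) : ℂ) = 2 * Complex.cos (θ : ℂ) := by
        rw [← hoc, hcosθ]
        push_cast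
        ring
      rw [this, hc]
      push_cast
      ring
    have hne : ξ ≠ η := by
      intro h
      rw [← h] at hmul
      have h1 : Complex.exp (θ * Complex.I + θ * Complex.I) = 1 := by
        rw [Complex.exp_add, ← hξ]; exact hmul
      obtain ⟨k, hk⟩ := Complex.exp_eq_one_iff.mp h1
      have hk2 : (2 * θ : ℝ) = k * (2 * π) := by
        apply Complex.ofReal_inj.mp
        apply mul_right_cancel₀ Complex.I_ne_zero
        push_cast
        linear_combination hk
      have hπ := Real.pi_pos
      rcases lt_trichotomy (k : ℝ) 0 with hkk | hkk | hkk
      · nlinarith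
      · rw [hkk] at hk2; nlinarith
      · have : (1 : ℝ) ≤ (k : ℝ) := by exact_mod_cast (by exact_mod_cast hkk : 0 < k)
        nlinarith
    obtain ⟨N, hN1, hNe⟩ := master hmul hadd hne hfin hA hB s₀ hs₀ hs₀0
    have hNe' : Complex.exp ((4 * N : ℕ) * (θ * Complex.I)) = 1 := by
      rw [Complex.exp_nat_mul, ← hξ, hNe]
    obtain ⟨k, hk⟩ := Complex.exp_eq_one_iff.mp hNe'
    have hk2 : (4 * N * θ : ℝ) = k * (2 * π) := by
      apply Complex.ofReal_inj.mp
      apply mul_right_cancel₀ Complex.I_ne_zero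
      push_cast
      push_cast at hk
      linear_combination hk
    have hπ := Real.pi_pos
    have hNpos : (0 : ℝ) < N := by exact_mod_cast hN1
    have hkpos : (0 : ℝ) < (k : ℝ) := by nlinarith
    have hkposZ : 0 < k := by exact_mod_cast hkpos
    have hkN : (k : ℝ) < N := by nlinarith
    have hkNZ : k < (N : ℤ) := by exact_mod_cast hkN
    have hcast : ((k.toNat : ℕ) : ℝ) = (k : ℝ) := by
      rw [← Int.cast_natCast, Int.toNat_of_nonneg hkposZ.le]
    refine ⟨2 * N, k.toNat, by omega, by omega, ?_⟩
    have hθeq : π * ((k.toNat : ℕ) : ℝ) / ((2 * N : ℕ) : ℝ) = θ := by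
      rw [hcast]
      push_cast
      field_simp
      nlinarith [hk2]
    rw [hθeq, hcosθ]
    ring
  · exact ⟨1, 0, le_refl 1, by norm_num, by
      rw [h2]
      norm_num⟩
  · -- hyperbolic case : contradiction
    exfalso
    have hs4 : (0 : ℝ) < t ^ 2 - 4 := by nlinarith
    set r := Real.sqrt (t ^ 2 - 4) with hr
    have hrpos : 0 < r := Real.sqrt_pos.2 hs4
    have hr2 : r ^ 2 = t ^ 2 - 4 := Real.sq_sqrt hs4.le
    set lam := (t + r) / 2 with hlam
    set mu := (t - r) / 2 with hmu
    have hmulR : lam * mu = 1 := by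
      rw [hlam, hmu]
      nlinarith [hr2]
    have hmul : ((lam : ℝ) : ℂ) * ((mu : ℝ) : ℂ) = 1 := by
      rw [← Complex.ofReal_mul, hmulR]
      norm_num
    have hadd : ((lam : ℝ) : ℂ) + ((mu : ℝ) : ℂ) = (t : ℂ) := by
      rw [← Complex.ofReal_add]
      congr 1
      rw [hlam, hmu]
      ring
    have hne : ((lam : ℝ) : ℂ) ≠ ((mu : ℝ) : ℂ) := by
      intro h
      have : lam = mu := Complex.ofReal_inj.mp h
      rw [hlam, hmu] at this
      nlinarith
    obtain ⟨N, hN1, hNe⟩ := master hmul hadd hne hfin hA hB s₀ hs₀ hs₀0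
    have hlamR : lam ^ (4 * N) = 1 := by
      have : ((lam ^ (4 * N) : ℝ) : ℂ) = 1 := by
        rw [Complex.ofReal_pow, hNe]
      exact_mod_cast this
    have hlam1 : 1 < lam := by
      rw [hlam]
      nlinarith
    have : 1 < lam ^ (4 * N) := one_lt_pow₀ hlam1 (by omega)
    rw [hlamR] at this
    exact lt_irrefl _ this

end form

section glue

lemma mutate_skew {n : ℕ} {C : Matrix (Fin n) (Fin n) ℝ} (h : IsSkewSymmetric C)
    (k : Fin n) : IsSkewSymmetric (mutate C k) := by
  intro a b
  simp only [mutate]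
  by_cases hab : a = k ∨ b = k
  · rw [if_pos hab, if_pos (Or.symm hab), h a b]
  · push_neg at hab
    rw [if_neg (by tauto), if_neg (by tauto)]
    rw [h a b, h k b, h a k, abs_neg, abs_neg]
    ring

lemma min_half (w : ℝ) : min w 0 = (w - |w|) / 2 := by
  rcases le_or_gt w 0 with h | h
  · rw [min_eq_left h, abs_of_nonpos h]; ring
  · rw [min_eq_right h.le, abs_of_pos h]; ring

lemma max_half (w : ℝ) : max w 0 = (w + |w|) / 2 := by
  rcases le_or_gt w 0 with h | h
  · rw [max_eq_right h, abs_of_nonpos h]; ring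
  · rw [max_eq_left h.le, abs_of_pos h]; ring

/-- the two-coordinate projection of the quiver state -/
def pr (t : ℝ) (i j k : Fin 3) (C : Matrix (Fin 3) (Fin 3) ℝ) : ℝ × ℝ :=
  (C i j * C i k / t, C i j * C j k / t)

variable {t : ℝ} {i j k : Fin 3}

lemma abs_eq_of_sq {a : ℝ} (ht : 0 < t) (h : a ^ 2 = t ^ 2) : |a| = t := by
  have hf : (a - t) * (a + t) = 0 := by linear_combination h
  rcases mul_eq_zero.mp hf with h1 | h1
  · have : a = t := by linarith
    rw [this, abs_of_pos ht]
  · have : a = -t := by linarith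
    rw [this, abs_neg, abs_of_pos ht]

lemma pr_mutate_i (hij : i ≠ j) (hik : i ≠ k) (hjk : j ≠ k) (ht : 0 < t)
    {C : Matrix (Fin 3) (Fin 3) ℝ} (hsk : IsSkewSymmetric C) (hsq : (C i j) ^ 2 = t ^ 2) :
    pr t i j k (mutate C i) = Amap t (pr t i j k C) := by
  have habs : |C i j| = t := abs_eq_of_sq ht hsq
  have e1 : (mutate C i) i j = -C i j := by
    simp [mutate]
  have e2 : (mutate C i) i k = -C i k := by
    simp [mutate]
  have e3 : (mutate C i) j k = C j k + (|C j i| * C i k + C j i * |C i k|) / 2 := by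
    simp only [mutate]
    rw [if_neg (by push_neg; exact ⟨hij.symm, hik.symm⟩)]
  have e4 : C j i = -C i j := hsk i j
  have ht0 : t ≠ 0 := ne_of_gt ht
  have hu : |C i j * C i k / t| = |C i k| := by
    rw [abs_div, abs_mul, habs, abs_of_pos ht]
    field_simp
  simp only [pr, Amap, e1, e2, e3, e4, abs_neg, habs]
  rw [Prod.mk.injEq]
  constructor
  · field_simp
  · rw [min_half, hu]
    field_simp
    linear_combination (|C i k|) * hsq

lemma pr_mutate_j (hij : i ≠ j) (hik : i ≠ k) (hjk : j ≠ k) (ht : 0 < t)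
    {C : Matrix (Fin 3) (Fin 3) ℝ} (hsk : IsSkewSymmetric C) (hsq : (C i j) ^ 2 = t ^ 2) :
    pr t i j k (mutate C j) = Bmap t (pr t i j k C) := by
  have habs : |C i j| = t := abs_eq_of_sq ht hsq
  have e1 : (mutate C j) i j = -C i j := by
    simp [mutate]
  have e2 : (mutate C j) j k = -C j k := by
    simp [mutate]
  have e3 : (mutate C j) i k = C i k + (|C i j| * C j k + C i j * |C j k|) / 2 := by
    simp only [mutate]
    rw [if_neg (by push_neg; exact ⟨hij, hjk.symm⟩)]
  have ht0 : t ≠ 0 := ne_of_gt ht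
  have hv : |C i j * C j k / t| = |C j k| := by
    rw [abs_div, abs_mul, habs, abs_of_pos ht]
    field_simp
  simp only [pr, Bmap, e1, e2, e3, habs]
  rw [Prod.mk.injEq]
  constructor
  · rw [max_half, hv]
    field_simp
    linear_combination (-|C j k|) * hsq
  · field_simp

end glue


lemma mutate_entry_i {C : Matrix (Fin 3) (Fin 3) ℝ} {i j : Fin 3} :
    (mutate C i) i j = -C i j := by simp [mutate]

lemma mutate_entry_j {C : Matrix (Fin 3) (Fin 3) ℝ} {i j : Fin 3} :
    (mutate C j) i j = -C i j := by simp [mutate]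

/-- Every weight of a connected mutation-finite rank-3 real quiver is of the form
`2cos(πm/d)` with `d ≥ 1` and `0 ≤ m ≤ d/2`. -/
theorem rank3_weights (B : Matrix (Fin 3) (Fin 3) ℝ)
    (hskew : IsSkewSymmetric B) (hconn : Connected B) (hfin : MutationFinite B) :
    ∀ i j : Fin 3, i ≠ j → ∃ d m : ℕ, 1 ≤ d ∧ 2 * m ≤ d ∧
      |B i j| = 2 * Real.cos (π * m / d) := by
  intro i j hij
  set k : Fin 3 := -(i + j) with hk
  have hdist : i ≠ k ∧ j ≠ k := by
    have h : ∀ a b : Fin 3, a ≠ b → a ≠ -(a + b) ∧ b ≠ -(a + b) := by decide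
    exact h i j hij
  obtain ⟨hik, hjk⟩ := hdist
  set t := |B i j| with ht
  have ht0 : 0 ≤ t := abs_nonneg _
  rcases eq_or_lt_of_le ht0 with h0 | h0
  · refine ⟨2, 1, by norm_num, by norm_num, ?_⟩
    rw [show (π * ((1:ℕ):ℝ) / ((2:ℕ):ℝ) : ℝ) = π / 2 by push_cast; ring,
      Real.cos_pi_div_two, ← h0]
    ring
  · set R : Matrix (Fin 3) (Fin 3) ℝ → Prop :=
      Relation.ReflTransGen (fun X Y => Y = mutate X i ∨ Y = mutate X j) B with hR
    have hinv : ∀ C, R C → IsSkewSymmetric C ∧ (C i j) ^ 2 = t ^ 2 := by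
      intro C hC
      induction hC with
      | refl => exact ⟨hskew, by rw [ht, sq_abs]⟩
      | tail hr hstep ih =>
        rcases hstep with rfl | rfl
        · exact ⟨mutate_skew ih.1 i, by rw [mutate_entry_i, neg_sq]; exact ih.2⟩
        · exact ⟨mutate_skew ih.1 j, by rw [mutate_entry_j, neg_sq]; exact ih.2⟩
    set S : Set (ℝ × ℝ) := pr t i j k '' {C | R C} with hS
    have hsubset : {C | R C} ⊆ {C | Reachable B C} := by
      intro C hC
      exact Relation.ReflTransGen.mono
        (fun X Y (h : Y = mutate X i ∨ Y = mutate X j) => h.elim (fun e => ⟨i, e⟩) (fun e => ⟨j, e⟩)) _ _ hC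
    have hfinS : S.Finite := (hfin.subset hsubset).image _
    have hA : ∀ s ∈ S, Amap t s ∈ S := by
      rintro s ⟨C, hC, rfl⟩
      exact ⟨mutate C i, Relation.ReflTransGen.tail hC (Or.inl rfl),
        pr_mutate_i hij hik hjk h0 (hinv C hC).1 (hinv C hC).2⟩
    have hB : ∀ s ∈ S, Bmap t s ∈ S := by
      rintro s ⟨C, hC, rfl⟩
      exact ⟨mutate C j, Relation.ReflTransGen.tail hC (Or.inr rfl),
        pr_mutate_j hij hik hjk h0 (hinv C hC).1 (hinv C hC).2⟩
    have hs₀ : pr t i j k B ∈ S := ⟨B, Relation.ReflTransGen.refl, rfl⟩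
    have htne : t ≠ 0 := ne_of_gt h0
    have hBij : B i j ≠ 0 := abs_pos.mp (ht ▸ h0)
    have hne : pr t i j k B ≠ 0 := by
      intro hzero
      rw [Prod.ext_iff] at hzero
      obtain ⟨h1, h2⟩ := hzero
      simp only [pr] at h1 h2
      have hBik : B i k = 0 := by
        rcases mul_eq_zero.mp ((div_eq_zero_iff.mp h1).resolve_right htne) with h | h
        · exact absurd h hBij
        · exact h
      have hBjk : B j k = 0 := by
        rcases mul_eq_zero.mp ((div_eq_zero_iff.mp h2).resolve_right htne) with h | h
        · exact absurd h hBij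
        · exact h
      have hthird : ∀ w : Fin 3, w ≠ k → w = i ∨ w = j := by
        have h' : ∀ a b : Fin 3, a ≠ b → ∀ w : Fin 3, w ≠ -(a + b) → w = a ∨ w = b := by
          decide
        intro w hwk
        exact h' i j hij w (by rwa [← hk])
      clear_value k
      obtain ⟨p⟩ := hconn.preconnected k i
      cases p with
      | nil => exact hik rfl
      | cons h q =>
        rename_i w
        have hw : w = i ∨ w = j := hthird w (Ne.symm h.1)
        have hki : B k i = 0 := by rw [hskew i k, hBik, neg_zero]
        have hkj : B k j = 0 := by rw [hskew j k, hBjk, neg_zero]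
        rcases hw with rfl | rfl
        · exact h.2.elim (fun hh => hh hki) (fun hh => hh hBik)
        · exact h.2.elim (fun hh => hh hkj) (fun hh => hh hBjk)
    exact weight_form ht0 hfinS hA hB _ hs₀ hne

end RealQuiver
end
end

section
/- Let B be a connected mutation-finite real quiver of rank 3 that contains an arrow of weight 2 (i.e. |b_ij| = 2 for some i,j). Then B is a cyclic quiver, and up to simultaneous permutation of the indices B equals either (2,2,2) or (2, 2cos(πm/d), 2cos(πm/d)) for some integers d ≥ 1 and 0 < m ≤ d/2. -/
open Real

noncomputable section

namespace RealQuiver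

variable {n : ℕ}

section Aux
-- basic lemmas
lemma mutate_neg (B : Matrix (Fin n) (Fin n) ℝ) (k : Fin n) : mutate (-B) k = -(mutate B k) := by
  funext i j
  simp only [mutate, Matrix.neg_apply, abs_neg]
  split <;> ring

lemma mutate_permute (B : Matrix (Fin n) (Fin n) ℝ) (σ : Equiv.Perm (Fin n)) (k : Fin n) :
    mutate (permute B σ) k = permute (mutate B (σ k)) σ := by
  funext i j
  simp only [mutate, permute]
  have h : (i = k ∨ j = k) ↔ (σ i = σ k ∨ σ j = σ k) := by
    simp [σ.injective.eq_iff]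
  rw [if_congr h rfl rfl]

lemma reachable_of_permute {B : Matrix (Fin n) (Fin n) ℝ} {σ : Equiv.Perm (Fin n)}
    {C : Matrix (Fin n) (Fin n) ℝ} (h : Reachable (permute B σ) C) :
    ∃ C₀, Reachable B C₀ ∧ C = permute C₀ σ := by
  induction h with
  | refl => exact ⟨B, .refl, rfl⟩
  | tail _ hstep ih =>
    obtain ⟨C₀, hC₀, rfl⟩ := ih
    obtain ⟨k, rfl⟩ := hstep
    exact ⟨mutate C₀ (σ k), hC₀.tail ⟨σ k, rfl⟩, (mutate_permute C₀ σ k).symm ▸ rfl⟩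

lemma mutationFinite_permute {B : Matrix (Fin n) (Fin n) ℝ} (σ : Equiv.Perm (Fin n))
    (h : MutationFinite B) : MutationFinite (permute B σ) := by
  apply Set.Finite.subset (h.image (fun M => permute M σ))
  rintro C hC
  obtain ⟨C₀, hC₀, rfl⟩ := reachable_of_permute hC
  exact ⟨C₀, hC₀, rfl⟩

lemma permute_permute (B : Matrix (Fin n) (Fin n) ℝ) (σ ρ : Equiv.Perm (Fin n)) :
    permute (permute B σ) ρ = permute B (σ * ρ) := rfl

-- the S family
def S (t a b : ℝ) : Matrix (Fin 3) (Fin 3) ℝ := !![0, a, b; -a, 0, t; -b, -t, 0]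

lemma abs_helper {a b : ℝ} (h : 0 ≤ a * b) : |a| * b = a * |b| := by
  rcases abs_cases a with ⟨h1, h2⟩ <;> rcases abs_cases b with ⟨h3, h4⟩ <;> nlinarith

lemma mu2_eq {t b : ℝ} (a : ℝ) (ht : 0 < t) (hb : b < 0) :
    mutate (S t a b) 2 = -(S t (-a - t*b) b) := by
  ext i j
  fin_cases i <;> fin_cases j <;>
    simp [mutate, S, abs_of_pos ht, abs_of_neg hb] <;> ring

lemma mu1_pos {t a : ℝ} (b : ℝ) (ht : 0 < t) (ha : 0 < a) :
    mutate (S t a b) 1 = -(S t a (-b - t*a)) := by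
  ext i j
  fin_cases i <;> fin_cases j <;>
    simp [mutate, S, abs_of_pos ht, abs_of_pos ha] <;> ring

lemma mu1_nonpos {t a : ℝ} (b : ℝ) (ht : 0 < t) (ha : a ≤ 0) :
    mutate (S t a b) 1 = -(S t a (-b)) := by
  ext i j
  fin_cases i <;> fin_cases j <;>
    simp [mutate, S, abs_of_pos ht, abs_of_nonpos ha] <;> ring

lemma mu0_eq {t a b : ℝ} (ht : 0 < t) (hab : 0 ≤ a * b) :
    mutate (S t a b) 0 = S t (-a) (-b) := by
  have h1 : |a| * b = a * |b| := abs_helper hab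
  have h2 : |b| * a = b * |a| := abs_helper (by linarith [mul_comm a b])
  ext i j
  fin_cases i <;> fin_cases j <;>
    simp [mutate, S, abs_of_pos ht] <;> nlinarith [h1, h2]


/-- `S t a b` or its negative is reachable from `B₀`. -/
def Rch (B₀ : Matrix (Fin 3) (Fin 3) ℝ) (t a b : ℝ) : Prop :=
  ∃ C, Reachable B₀ C ∧ (C = S t a b ∨ C = -(S t a b))

lemma Rch.base (t a b : ℝ) : Rch (S t a b) t a b := ⟨_, .refl, Or.inl rfl⟩

lemma Rch.step_neg {B₀ : Matrix (Fin 3) (Fin 3) ℝ} {t a b a' b' : ℝ} (k : Fin 3)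
    (h : mutate (S t a b) k = -(S t a' b')) (hr : Rch B₀ t a b) : Rch B₀ t a' b' := by
  obtain ⟨C, hC, hc | hc⟩ := hr
  · exact ⟨mutate C k, hC.tail ⟨k, rfl⟩, Or.inr (by rw [hc, h])⟩
  · refine ⟨mutate C k, hC.tail ⟨k, rfl⟩, Or.inl ?_⟩
    rw [hc, mutate_neg, h, neg_neg]

lemma Rch.step_pos {B₀ : Matrix (Fin 3) (Fin 3) ℝ} {t a b a' b' : ℝ} (k : Fin 3)
    (h : mutate (S t a b) k = S t a' b') (hr : Rch B₀ t a b) : Rch B₀ t a' b' := by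
  obtain ⟨C, hC, hc | hc⟩ := hr
  · exact ⟨mutate C k, hC.tail ⟨k, rfl⟩, Or.inl (by rw [hc, h])⟩
  · refine ⟨mutate C k, hC.tail ⟨k, rfl⟩, Or.inr ?_⟩
    rw [hc, mutate_neg, h]

-- the four moves
lemma Rch.m2 {B₀ t a b} (ht : 0 < t) (hb : b < 0) (h : Rch B₀ t a b) :
    Rch B₀ t (-a - t*b) b := h.step_neg 2 (mu2_eq a ht hb)
lemma Rch.m1 {B₀ t a b} (ht : 0 < t) (ha : 0 < a) (h : Rch B₀ t a b) :
    Rch B₀ t a (-b - t*a) := h.step_neg 1 (mu1_pos b ht ha)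
lemma Rch.fb {B₀ t a b} (ht : 0 < t) (ha : a ≤ 0) (h : Rch B₀ t a b) :
    Rch B₀ t a (-b) := h.step_neg 1 (mu1_nonpos b ht ha)
lemma Rch.fab {B₀ t a b} (ht : 0 < t) (hab : 0 ≤ a * b) (h : Rch B₀ t a b) :
    Rch B₀ t (-a) (-b) := h.step_pos 0 (mu0_eq ht hab)

/-- extract first-coordinate absolute value from Rch witnesses -/
lemma eq_coords {t a b a' b' : ℝ} {C : Matrix (Fin 3) (Fin 3) ℝ} (ht : 0 < t)
    (h1 : C = S t a b ∨ C = -(S t a b)) (h2 : C = S t a' b' ∨ C = -(S t a' b')) :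
    |a| = |a'| ∧ |b| = |b'| := by
  have key : ∀ x y x' y' : ℝ, S t x y = -(S t x' y') → False := by
    intro x y x' y' h
    have := congrFun (congrFun h 1) 2
    simp [S] at this
    linarith
  rcases h1 with rfl | rfl <;> rcases h2 with h | h
  · have h01 := congrFun (congrFun h 0) 1
    have h02 := congrFun (congrFun h 0) 2
    simp [S] at h01 h02
    rw [h01, h02]; exact ⟨rfl, rfl⟩
  · exact absurd h (key _ _ _ _)
  · exact absurd h.symm (key _ _ _ _)
  · have : S t a b = S t a' b' := by
      have := congrArg Neg.neg h
      simpa using this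
    have h01 := congrFun (congrFun this 0) 1
    have h02 := congrFun (congrFun this 0) 2
    simp [S] at h01 h02
    rw [h01, h02]; exact ⟨rfl, rfl⟩


-- actual content
lemma esc {B₀ : Matrix (Fin 3) (Fin 3) ℝ} {a b : ℝ} (ha : 0 < a) (hb : b < 0)
    (hs : a + b ≠ 0) (h : Rch B₀ 2 a b) : ¬ MutationFinite B₀ := by
  set d : ℝ := |a + b| with hd
  have hd0 : 0 < d := abs_pos.mpr hs
  have main : ∀ k : ℕ, Rch B₀ 2 (a + 2*k*d) (b - 2*k*d) := by
    intro k
    induction k with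
    | zero => simpa using h
    | succ k ih =>
      have hA : 0 < a + 2*k*d := by positivity
      have hB : b - 2*k*d < 0 := by nlinarith [mul_nonneg (Nat.cast_nonneg (α := ℝ) k) hd0.le]
      rcases lt_or_gt_of_ne hs with hsneg | hspos
      · -- a + b < 0, d = -(a+b)
        have hdval : d = -(a+b) := abs_of_neg hsneg
        have s1 := ih.m2 two_pos hB
        have hA' : 0 < -(a + 2*k*d) - 2*(b - 2*k*d) := by nlinarith
        have s2 := s1.m1 two_pos hA'
        have e1 : a + 2*((k:ℝ)+1)*d = -(a + 2*k*d) - 2*(b - 2*k*d) := by rw [hdval]; ring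
        have e2 : b - 2*((k:ℝ)+1)*d = -(b - 2*k*d) - 2*(-(a + 2*k*d) - 2*(b - 2*k*d)) := by
          rw [hdval]; ring
        push_cast
        rw [e1, e2]
        exact s2
      · -- a + b > 0, d = a + b
        have hdval : d = a + b := abs_of_pos hspos
        have s1 := ih.m1 two_pos hA
        have hB' : -(b - 2*k*d) - 2*(a + 2*k*d) < 0 := by nlinarith
        have s2 := s1.m2 two_pos hB'
        have e1 : b - 2*((k:ℝ)+1)*d = -(b - 2*k*d) - 2*(a + 2*k*d) := by rw [hdval]; ring
        have e2 : a + 2*((k:ℝ)+1)*d = -(a + 2*k*d) - 2*(-(b - 2*k*d) - 2*(a + 2*k*d)) := by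
          rw [hdval]; ring
        push_cast
        rw [e1, e2]
        exact s2
  intro hfin
  choose C hC hC' using main
  have hinj : Function.Injective C := by
    intro k l hkl
    have h2 := hC' l
    rw [← hkl] at h2
    have := (eq_coords two_pos (hC' k) h2).1
    have hk0 : 0 < a + 2*k*d := by positivity
    have hl0 : 0 < a + 2*l*d := by positivity
    rw [abs_of_pos hk0, abs_of_pos hl0] at this
    have h2d : (2*d) * (k:ℝ) = (2*d) * (l:ℝ) := by linear_combination this
    have : (k:ℝ) = (l:ℝ) := mul_left_cancel₀ (by positivity) h2d
    exact_mod_cast this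
  exact (Set.infinite_of_injective_forall_mem hinj (fun k => hC k)) hfin

lemma ml1 {a b : ℝ} (hne : ¬(0 < a ∧ b < 0 ∧ a + b = 0)) (hnz : ¬(a = 0 ∧ b = 0)) :
    ¬ MutationFinite (S 2 a b) := by
  have h0 := Rch.base 2 a b
  rcases lt_trichotomy b 0 with hb | hb | hb
  · rcases le_or_gt a 0 with ha | ha
    · have h1 := h0.m2 two_pos hb
      have hA : 0 < -a - 2*b := by nlinarith
      exact esc hA hb (by intro hh; nlinarith) h1
    · have hs : a + b ≠ 0 := fun hh => hne ⟨ha, hb, hh⟩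
      exact esc ha hb hs h0
  · subst hb
    rcases lt_trichotomy a 0 with ha | ha | ha
    · have h1 := h0.fab two_pos (by simp)
      have h2 := h1.m1 two_pos (by linarith : (0:ℝ) < -a)
      have e : -(-0) - 2 * -a = 2*a := by ring
      rw [e] at h2
      refine esc ?_ ?_ ?_ h2
      · linarith
      · linarith
      · intro hh; nlinarith
    · exact absurd ⟨ha, rfl⟩ hnz
    · have h1 := h0.m1 two_pos ha
      have e : -(0:ℝ) - 2 * a = -(2*a) := by ring
      rw [e] at h1
      refine esc ha ?_ ?_ h1
      · linarith
      · intro hh; nlinarith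
  · rcases le_or_gt a 0 with ha | ha
    · have h1 := h0.fb two_pos ha
      have h2 := h1.m2 two_pos (by linarith : -b < 0)
      have hA : 0 < -a - 2 * -b := by nlinarith
      refine esc hA ?_ ?_ h2
      · linarith
      · intro hh; nlinarith
    · have h1 := h0.m1 two_pos ha
      refine esc ha ?_ ?_ h1
      · nlinarith
      · intro hh; nlinarith


/-- the Chebyshev-like sequence `u k = 2 cos (k arccos (t/2))`. -/
def useq (t : ℝ) : ℕ → ℝ
  | 0 => 2
  | 1 => t
  | (k+2) => t * useq t (k+1) - useq t k

section ML2
variable {B₀ : Matrix (Fin 3) (Fin 3) ℝ} {t : ℝ}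

def Pp (B₀ : Matrix (Fin 3) (Fin 3) ℝ) (t : ℝ) (k : ℕ) : Prop :=
  ∃ ε : ℝ, (ε = 1 ∨ ε = -1) ∧ 0 < ε * useq t k ∧ Rch B₀ t (ε * useq t k) (-(ε * useq t (k+1)))

def Qq (B₀ : Matrix (Fin 3) (Fin 3) ℝ) (t : ℝ) (k : ℕ) : Prop :=
  ∃ ε : ℝ, (ε = 1 ∨ ε = -1) ∧ 0 < ε * useq t k ∧ Rch B₀ t (ε * useq t (k+1)) (-(ε * useq t k))

lemma step_PQ (ht : 0 < t) {k : ℕ} (hnz : useq t (k+1) ≠ 0) (h : Pp B₀ t k) : Qq B₀ t (k+1) := by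
  obtain ⟨ε, hε, hpos, hR⟩ := h
  have hε2 : ε * ε = 1 := by rcases hε with rfl | rfl <;> ring
  have hne : ε * useq t (k+1) ≠ 0 := by
    rcases hε with rfl | rfl <;> simpa using hnz
  rcases lt_or_gt_of_ne hne with hneg | hpos1
  · -- ε * u_{k+1} < 0 : b = -ε u_{k+1} > 0 ; flip both then m2
    have h1 := hR.fab ht (by nlinarith)
    rw [neg_neg] at h1
    have h2 := h1.m2 ht hneg
    refine ⟨-ε, by rcases hε with rfl | rfl <;> simp, by rw [neg_mul]; linarith, ?_⟩
    have e1 : - -(ε * useq t k) - t * (ε * useq t (k+1)) = -ε * useq t (k+2) := by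
      show _ = -ε * (t * useq t (k+1) - useq t k); ring
    have e2 : ε * useq t (k+1) = -(-ε * useq t (k+1)) := by ring
    rw [e1] at h2
    rw [e2] at h2
    exact h2
  · -- ε * u_{k+1} > 0 : m2 directly
    have h2 := hR.m2 ht (by linarith : -(ε * useq t (k+1)) < 0)
    refine ⟨ε, hε, hpos1, ?_⟩
    have e : -(ε * useq t k) - t * -(ε * useq t (k+1)) = ε * useq t (k+2) := by
      show _ = ε * (t * useq t (k+1) - useq t k)
      ring
    rw [e] at h2
    exact h2

lemma step_QP (ht : 0 < t) {k : ℕ} (hnz : useq t (k+1) ≠ 0) (h : Qq B₀ t k) : Pp B₀ t (k+1) := by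
  obtain ⟨ε, hε, hpos, hR⟩ := h
  have hne : ε * useq t (k+1) ≠ 0 := by
    rcases hε with rfl | rfl <;> simpa using hnz
  rcases lt_or_gt_of_ne hne with hneg | hpos1
  · -- a = ε u_{k+1} < 0, b = -ε u_k < 0 : flip both then m1
    have h1 := hR.fab ht (by nlinarith)
    rw [neg_neg] at h1
    have h2 := h1.m1 ht (by linarith)
    refine ⟨-ε, by rcases hε with rfl | rfl <;> simp, by rw [neg_mul]; linarith, ?_⟩
    have e1 : -(ε * useq t k) - t * -(ε * useq t (k+1)) = -(-ε * useq t (k+1+1)) := by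
      show _ = -(-ε * (t * useq t (k+1) - useq t k)); ring
    have e2 : -(ε * useq t (k+1)) = -ε * useq t (k+1) := by ring
    rw [e1, e2] at h2
    exact h2
  · -- a = ε u_{k+1} > 0 : m1 directly
    have h2 := hR.m1 ht hpos1
    refine ⟨ε, hε, hpos1, ?_⟩
    have e : - -(ε * useq t k) - t * (ε * useq t (k+1)) = -(ε * useq t (k+1+1)) := by
      show _ = -(ε * (t * useq t (k+1) - useq t k)); ring
    rw [e] at h2
    exact h2

lemma chain (ht : 0 < t) (hnz : ∀ j, useq t j ≠ 0) : ∀ m : ℕ, Pp (S t 2 (-t)) t (2*m) := by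
  intro m
  induction m with
  | zero =>
    refine ⟨1, Or.inl rfl, by norm_num [useq], ?_⟩
    have : (1:ℝ) * useq t 0 = 2 := by norm_num [useq]
    rw [this, show -((1:ℝ) * useq t 1) = -t by norm_num [useq]]
    exact Rch.base t 2 (-t)
  | succ m ih =>
    have h1 := step_PQ ht (hnz _) ih
    have h2 := step_QP ht (hnz _) h1
    rw [show 2*(m+1) = 2*m+1+1 by ring]
    exact h2

lemma ml2core (ht : 0 < t) (hfin : MutationFinite (S t 2 (-t))) :
    (∃ j, useq t j = 0) ∨ ∃ k l : ℕ, k < l ∧ |useq t k| = |useq t l| := by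
  by_cases hz : ∃ j, useq t j = 0
  · exact Or.inl hz
  push_neg at hz
  have hP := chain ht hz
  choose ε hε hpos hR using hP
  choose C hC hC' using hR
  right
  have : ¬ Function.Injective C := by
    intro hinj
    exact (Set.infinite_of_injective_forall_mem hinj (fun m => hC m)) hfin
  rw [Function.not_injective_iff] at this
  obtain ⟨m, m', hmm', hne⟩ := this
  have h2 := hC' m'
  rw [← hmm'] at h2
  have habs := (eq_coords ht (hC' m) h2).1
  have hε1 : ∀ m, |ε m| = 1 := by
    intro m; rcases hε m with h | h <;> simp [h]
  rw [abs_mul, abs_mul, hε1, hε1, one_mul, one_mul] at habs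
  rcases Nat.lt_or_ge m m' with hlt | hge
  · exact ⟨2*m, 2*m', by omega, habs⟩
  · have : m' < m := by omega
    exact ⟨2*m', 2*m, by omega, habs.symm⟩

lemma useq_mono (ht : 2 < t) : ∀ k, 2 ≤ useq t k ∧ useq t k < useq t (k+1) := by
  intro k
  induction k using Nat.strong_induction_on with
  | _ k ih =>
    match k with
    | 0 => exact ⟨by norm_num [useq], by norm_num [useq]; linarith⟩
    | 1 => refine ⟨by norm_num [useq]; linarith, ?_⟩
           show t < t * t - 2
           nlinarith
    | (k+2) =>
      obtain ⟨h1, h2⟩ := ih (k+1) (by omega)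
      obtain ⟨h0, h0'⟩ := ih k (by omega)
      constructor
      · show 2 ≤ useq t (k+2); rw [show useq t (k+2) = t * useq t (k+1) - useq t k from rfl]
        nlinarith
      · show useq t (k+2) < t * useq t (k+2) - useq t (k+1)
        have h3 : 2 ≤ useq t (k+2) := by
          rw [show useq t (k+2) = t * useq t (k+1) - useq t k from rfl]; nlinarith
        nlinarith

lemma useq_cos (ht0 : 0 < t) (ht2 : t < 2) :
    ∀ k : ℕ, useq t k = 2 * Real.cos (k * Real.arccos (t/2)) := by
  have hc : Real.cos (Real.arccos (t/2)) = t/2 :=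
    Real.cos_arccos (by linarith) (by linarith)
  intro k
  induction k using Nat.strong_induction_on with
  | _ k ih =>
    match k with
    | 0 => norm_num [useq]
    | 1 => rw [show useq t 1 = t from rfl]; push_cast; rw [one_mul, hc]; ring
    | (k+2) =>
      have h1 := ih (k+1) (by omega)
      have h0 := ih k (by omega)
      rw [show useq t (k+2) = t * useq t (k+1) - useq t k from rfl, h1, h0]
      set θ := Real.arccos (t/2)
      have e2 : ((k:ℝ)+2) * θ = ((k:ℝ)+1) * θ + θ := by ring
      have e0 : (k:ℝ) * θ = ((k:ℝ)+1) * θ - θ := by ring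
      push_cast
      rw [e2, e0, Real.cos_add, Real.cos_sub, hc]
      ring

lemma build {θ : ℝ} (hθ0 : 0 < θ) (hθ2 : θ < π/2) (N : ℕ) (hN : 1 ≤ N) (n : ℤ)
    (h : (n:ℝ) * π = N * θ) :
    ∃ m d : ℕ, 1 ≤ d ∧ 0 < m ∧ 2*m ≤ d ∧ π * m / d = θ := by
  have hπ := Real.pi_pos
  have hn0 : 0 < n := by
    by_contra hn
    push_neg at hn
    have h1 : (n:ℝ) ≤ 0 := by exact_mod_cast hn
    have h2 : 0 < (N:ℝ) * θ := by
      have : (0:ℝ) < N := by exact_mod_cast hN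
      positivity
    nlinarith
  have hcast : ((n.toNat : ℕ) : ℝ) = (n : ℝ) := by
    exact_mod_cast Int.toNat_of_nonneg hn0.le
  have hN0 : (0:ℝ) < N := by exact_mod_cast hN
  refine ⟨n.toNat, N, hN, by omega, ?_, ?_⟩
  · -- 2 * n.toNat ≤ N
    have h2 : (N:ℝ)*θ < (N:ℝ)*(π/2) := mul_lt_mul_of_pos_left hθ2 hN0
    have hlt : 2 * (n:ℝ) < N := by nlinarith
    have : 2 * (n.toNat : ℝ) < N := by rw [hcast]; exact hlt
    exact_mod_cast this.le
  · field_simp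
    rw [hcast]
    linarith [h]

lemma ml2 (ht0 : 0 < t) (htne : t ≠ 2) (hfin : MutationFinite (S t 2 (-t))) :
    ∃ m d : ℕ, 1 ≤ d ∧ 0 < m ∧ 2*m ≤ d ∧ t = 2 * Real.cos (π * m / d) := by
  rcases lt_trichotomy t 2 with ht2 | ht2 | ht2
  · -- 0 < t < 2
    set θ := Real.arccos (t/2) with hθ
    have hc : Real.cos θ = t/2 := Real.cos_arccos (by linarith) (by linarith)
    have hθ0 : 0 < θ := Real.arccos_pos.mpr (by linarith)
    have hθ2 : θ < π/2 := by
      by_contra hcon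
      push_neg at hcon
      have h1 : Real.cos θ ≤ 0 :=
        Real.cos_nonpos_of_pi_div_two_le_of_le hcon
          (by linarith [Real.arccos_le_pi (t/2), Real.pi_pos])
      linarith
    have key : ∃ m d : ℕ, 1 ≤ d ∧ 0 < m ∧ 2*m ≤ d ∧ π * m / d = θ := by
      rcases ml2core ht0 hfin with ⟨j, hj⟩ | ⟨k, l, hkl, habs⟩
      · -- zero case
        have hj0 : j ≠ 0 := by
          intro h0; rw [h0] at hj; norm_num [useq] at hj
        rw [useq_cos ht0 ht2] at hj
        have : Real.cos (j * θ) = 0 := by linarith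
        rw [Real.cos_eq_zero_iff] at this
        obtain ⟨n, hn⟩ := this
        refine build hθ0 hθ2 (2*j) (by omega) (2*n+1) ?_
        push_cast
        linear_combination -2 * hn
      · -- pigeonhole case
        rw [useq_cos ht0 ht2, useq_cos ht0 ht2] at habs
        have habs' : |Real.cos (k * θ)| = |Real.cos (l * θ)| := by
          have h2 : |(2:ℝ)| * |Real.cos (k * θ)| = |(2:ℝ)| * |Real.cos (l * θ)| := by
            rw [← abs_mul, ← abs_mul]; exact habs
          simpa using h2
        have hsq : Real.cos (2 * (k * θ)) = Real.cos (2 * (l * θ)) := by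
          rw [Real.cos_two_mul, Real.cos_two_mul, ← sq_abs (Real.cos (k*θ)),
            ← sq_abs (Real.cos (l*θ)), habs']
        have hprod : Real.sin (((k:ℝ)+l) * θ) * Real.sin (((k:ℝ)-l) * θ) = 0 := by
          have := Real.cos_sub_cos (2*(k*θ)) (2*(l*θ))
          rw [hsq, sub_self] at this
          have e1 : (2*((k:ℝ)*θ) + 2*((l:ℝ)*θ))/2 = ((k:ℝ)+l) * θ := by ring
          have e2 : (2*((k:ℝ)*θ) - 2*((l:ℝ)*θ))/2 = ((k:ℝ)-l) * θ := by ring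
          rw [e1, e2] at this
          linarith [this]
        rcases mul_eq_zero.mp hprod with hz | hz
        · rw [Real.sin_eq_zero_iff] at hz
          obtain ⟨n, hn⟩ := hz
          refine build hθ0 hθ2 (k+l) (by omega) n ?_
          push_cast
          linarith [hn]
        · have hz' : Real.sin (((l:ℝ)-k) * θ) = 0 := by
            have : ((l:ℝ)-k) * θ = -(((k:ℝ)-l) * θ) := by ring
            rw [this, Real.sin_neg, hz, neg_zero]
          rw [Real.sin_eq_zero_iff] at hz'
          obtain ⟨n, hn⟩ := hz'
          refine build hθ0 hθ2 (l-k) (by omega) n ?_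
          push_cast [Nat.cast_sub hkl.le]
          linarith [hn]
      
    obtain ⟨m, d, hd, hm, hmd, heq⟩ := key
    exact ⟨m, d, hd, hm, hmd, by rw [heq, hc]; ring⟩
  · exact absurd ht2 htne
  · -- t > 2 : contradiction
    exfalso
    have hmono := useq_mono ht2
    have hsm : StrictMono (useq t) := strictMono_nat_of_lt_succ (fun k => (hmono k).2)
    rcases ml2core ht0 hfin with ⟨j, hj⟩ | ⟨k, l, hkl, habs⟩
    · linarith [(hmono j).1, hj.symm.le]
    · have h1 : useq t k < useq t l := hsm hkl
      rw [abs_of_pos (by linarith [(hmono k).1]), abs_of_pos (by linarith [(hmono l).1])] at habs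
      linarith

end ML2

-- assembly pieces
lemma exists_perm : ∀ p q : Fin 3, p ≠ q →
    ∃ σ : Equiv.Perm (Fin 3), σ 1 = p ∧ σ 2 = q := by decide

def rho : Equiv.Perm (Fin 3) :=
  ⟨![1, 2, 0], ![2, 0, 1], by decide, by decide⟩

lemma S_eq_cyclicQ (x : ℝ) : S x 2 (-x) = cyclicQ 2 x x := by
  ext i j; fin_cases i <;> fin_cases j <;> simp [S, cyclicQ]

lemma permute_rho (a : ℝ) : permute (S 2 a (-a)) rho = S a 2 (-a) := by
  ext i j; fin_cases i <;> fin_cases j <;> simp [permute, S, rho]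

lemma cyclic_of_permute {B : Matrix (Fin 3) (Fin 3) ℝ} {σ : Equiv.Perm (Fin 3)}
    (h : Cyclic (permute B σ)) : Cyclic B := by
  obtain ⟨i, hi⟩ := h
  exact ⟨σ i, Relation.TransGen.lift σ (fun a b hab => hab) i i hi⟩


end Aux
/-- A connected mutation-finite rank-3 quiver with an arrow of weight 2 is cyclic,
and up to a simultaneous permutation of indices it is `(2,2,2)` or
`(2, 2cos(πm/d), 2cos(πm/d))`. -/
theorem rank3_double_arrow (B : Matrix (Fin 3) (Fin 3) ℝ)
    (hskew : IsSkewSymmetric B) (hconn : Connected B) (hfin : MutationFinite B)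
    (harrow : ∃ i j : Fin 3, |B i j| = 2) :
    Cyclic B ∧ ∃ σ : Equiv.Perm (Fin 3),
      permute B σ = cyclicQ 2 2 2 ∨
      ∃ d m : ℕ, 1 ≤ d ∧ 0 < m ∧ 2 * m ≤ d ∧
        permute B σ = cyclicQ 2 (2 * Real.cos (π * m / d)) (2 * Real.cos (π * m / d)) := by
  have hdiag : ∀ x, B x x = 0 := fun x => by have := hskew x x; linarith
  -- find p ≠ q with B p q = 2
  obtain ⟨i, j, hij⟩ := harrow
  have h2 : ∃ p q : Fin 3, B p q = 2 := by
    rcases abs_eq (by norm_num : (0:ℝ) ≤ 2) |>.mp hij with h | h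
    · exact ⟨i, j, h⟩
    · exact ⟨j, i, by rw [hskew i j, h]; norm_num⟩
  obtain ⟨p, q, hpq⟩ := h2
  have hpq_ne : p ≠ q := by
    intro h; rw [h, hdiag] at hpq; norm_num at hpq
  obtain ⟨σ, hσ1, hσ2⟩ := exists_perm p q hpq_ne
  set B' := permute B σ with hB'
  set a := B' 0 1 with ha
  set b := B' 0 2 with hb
  have hB'12 : B' 1 2 = 2 := by rw [hB']; show B (σ 1) (σ 2) = 2; rw [hσ1, hσ2]; exact hpq
  have hB'S : B' = S 2 a b := by
    ext x y
    fin_cases x <;> fin_cases y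
    · exact hdiag (σ 0)
    · rfl
    · rfl
    · exact hskew (σ 0) (σ 1)
    · exact hdiag (σ 1)
    · exact (show B (σ 1) (σ 2) = 2 from hB'12)
    · exact hskew (σ 0) (σ 2)
    · exact (hskew (σ 1) (σ 2)).trans
        (congrArg Neg.neg (show B (σ 1) (σ 2) = 2 from hB'12))
    · exact hdiag (σ 2)
  -- connectivity: not both a and b are zero
  have hnz : ¬(a = 0 ∧ b = 0) := by
    rintro ⟨ha0, hb0⟩
    have hzero : ∀ x, B (σ 0) x = 0 := by
      intro x
      obtain ⟨y, rfl⟩ := σ.surjective x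
      fin_cases y
      · exact hdiag (σ 0)
      · exact ha0
      · exact hb0
    have key : ∀ (v : Fin 3), (toGraph B).Walk (σ 0) v → v = σ 0 := by
      intro v w
      cases w with
      | nil => rfl
      | cons hadj _ =>
        exfalso
        rcases (show σ 0 ≠ _ ∧ (B (σ 0) _ ≠ 0 ∨ B _ (σ 0) ≠ 0) from hadj).2 with hne | hne
        · exact hne (hzero _)
        · exact hne (by rw [hskew (σ 0), hzero, neg_zero])
    obtain ⟨w⟩ := hconn.preconnected (σ 0) (σ 1)
    have h10 := key (σ 1) w
    have : (1 : Fin 3) = 0 := σ.injective h10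
    exact absurd this (by decide)
  have hfin' : MutationFinite (S 2 a b) := by
    rw [← hB'S]; exact mutationFinite_permute σ hfin
  by_cases hgood : 0 < a ∧ b < 0 ∧ a + b = 0
  · obtain ⟨ha0, hb0, hab⟩ := hgood
    have hba : b = -a := by linarith
    rw [hba] at hB'S
    -- B is cyclic
    have hcyc : Cyclic B := by
      apply cyclic_of_permute (σ := σ)
      refine ⟨0, ?_⟩
      have h01 : (0:ℝ) < (permute B σ) 0 1 := by
        rw [← hB']; rw [hB'S]; simpa [S] using ha0
      have h12 : (0:ℝ) < (permute B σ) 1 2 := by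
        rw [← hB']; rw [hB'S]; norm_num [S]; exact two_pos
      have h20 : (0:ℝ) < (permute B σ) 2 0 := by
        rw [← hB']; rw [hB'S]; simpa [S] using ha0
      exact Relation.TransGen.tail (Relation.TransGen.tail (Relation.TransGen.single h01) h12) h20
    refine ⟨hcyc, σ * rho, ?_⟩
    have hkey : permute B (σ * rho) = S a 2 (-a) := by
      rw [← permute_permute, ← hB', hB'S, permute_rho]
    rcases eq_or_ne a 2 with ha2 | hane
    · left
      rw [ha2] at hkey
      rw [hkey, S_eq_cyclicQ]
    · right
      have hfin2 : MutationFinite (S a 2 (-a)) := by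
        rw [← hkey, ← permute_permute, ← hB', hB'S]
        exact mutationFinite_permute rho (hba ▸ hfin')
      obtain ⟨m, d, hd, hm, hmd, hval⟩ := ml2 ha0 hane hfin2
      exact ⟨d, m, hd, hm, hmd, by rw [hkey, S_eq_cyclicQ, hval]⟩
  · exact absurd hfin' (ml1 hgood hnz)




end RealQuiver
end
end

section
/- The mutation class of the rank-4 quiver F_4, defined by b_12 = 1, b_23 = √2, b_34 = 1 and all other off-diagonal entries 0, consists of exactly 8 quivers counted up to simultaneous permutation of the indices; in particular F_4 is mutation-finite. -/
open Real

noncomputable section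

namespace RealQuiver

variable {n : ℕ}

/-- The quiver `F₄`: `b₁₂ = 1`, `b₂₃ = √2`, `b₃₄ = 1`, all other entries `0`. -/
def F4 : Matrix (Fin 4) (Fin 4) ℝ :=
  !![0, 1, 0, 0;
     -1, 0, Real.sqrt 2, 0;
     0, -(Real.sqrt 2), 0, 1;
     0, 0, -1, 0]

instance : Zsqrtd.Nonsquare 2 := ⟨fun n h => by rcases n with _|_|n <;> nlinarith⟩

abbrev K : Type := Zsqrtd ((2:ℕ):ℤ)

noncomputable def rt : K →+* ℝ := Zsqrtd.toReal (by positivity)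

lemma rt_apply (a : K) : rt a = (a.re : ℝ) + (a.im : ℝ) * Real.sqrt 2 := by
  simp only [rt, Zsqrtd.toReal_apply]
  norm_num

lemma rt_nonneg {a : K} (h : 0 ≤ a) : 0 ≤ rt a := by
  have h' : a.Nonneg := Zsqrtd.nonneg_iff_zero_le.mpr h
  obtain ⟨x, y, hxy | hxy | hxy⟩ := Zsqrtd.nonneg_cases h' <;> subst hxy
  · rw [rt_apply]
    positivity
  · have hs : Zsqrtd.SqLe y 2 x 1 := Zsqrtd.nonnegg_pos_neg.mp h'
    have hs' : (2:ℝ) * (y * y) ≤ 1 * (x * x) := by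
      have : (2 * (y * y) : ℕ) ≤ 1 * (x * x) := by
        simpa [Zsqrtd.SqLe, mul_assoc] using hs
      exact_mod_cast this
    have key := Real.sqrt_le_sqrt hs'
    rw [one_mul, Real.sqrt_mul_self (by positivity : (0:ℝ) ≤ (x:ℕ)),
      Real.sqrt_mul (by norm_num) ((y:ℝ) * y),
      Real.sqrt_mul_self (by positivity : (0:ℝ) ≤ (y:ℕ))] at key
    rw [rt_apply]
    push_cast
    nlinarith [key]
  · have hs : Zsqrtd.SqLe x 1 y 2 := Zsqrtd.nonnegg_neg_pos.mp h'
    have hs' : (1:ℝ) * (x * x) ≤ 2 * (y * y) := by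
      have : (1 * (x * x) : ℕ) ≤ 2 * (y * y) := by
        simpa [Zsqrtd.SqLe, mul_assoc] using hs
      exact_mod_cast this
    have key := Real.sqrt_le_sqrt hs'
    rw [one_mul, Real.sqrt_mul_self (by positivity : (0:ℝ) ≤ (x:ℕ)),
      Real.sqrt_mul (by norm_num) ((y:ℝ) * y),
      Real.sqrt_mul_self (by positivity : (0:ℝ) ≤ (y:ℕ))] at key
    rw [rt_apply]
    push_cast
    nlinarith [key]

lemma rt_mono : Monotone (rt : K → ℝ) := by
  intro a b hab
  have := rt_nonneg (sub_nonneg.mpr hab)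
  rw [map_sub] at this
  linarith

lemma rt_injective : Function.Injective (rt : K → ℝ) := by
  apply Zsqrtd.toReal_injective
  intro m hm
  have h2 : (2:ℕ) = m.natAbs * m.natAbs := by
    have := congrArg Int.natAbs hm
    simpa [Int.natAbs_mul] using this
  exact Zsqrtd.Nonsquare.ns 2 m.natAbs h2

lemma rt_strictMono : StrictMono (rt : K → ℝ) := rt_mono.strictMono_of_injective rt_injective

lemma rt_pos {a : K} : 0 < rt a ↔ 0 < a := by
  rw [← map_zero rt]; exact rt_strictMono.lt_iff_lt

lemma rt_neg' {a : K} : rt a < 0 ↔ a < 0 := by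
  rw [← map_zero rt]; exact rt_strictMono.lt_iff_lt


def kstep (x y : K) : K :=
  if 0 < x ∧ 0 < y then x * y else if x < 0 ∧ y < 0 then -(x * y) else 0

def ent (l : List K) (i j : Fin 4) : K := l.getD (4 * i.val + j.val) 0

def fmutate (l : List K) (k : Fin 4) : List K :=
  (List.finRange 4).flatMap fun i => (List.finRange 4).map fun j =>
    if i = k ∨ j = k then -(ent l i j) else ent l i j + kstep (ent l i k) (ent l k j)

def fperm (l : List K) (σ : Equiv.Perm (Fin 4)) : List K :=
  (List.finRange 4).flatMap fun i => (List.finRange 4).map fun j => ent l (σ i) (σ j)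

noncomputable def toRM (l : List K) : Matrix (Fin 4) (Fin 4) ℝ := fun i j => rt (ent l i j)

lemma real_step (a b : ℝ) : (|a| * b + a * |b|) / 2 =
    if 0 < a ∧ 0 < b then a * b else if a < 0 ∧ b < 0 then -(a * b) else 0 := by
  rcases lt_trichotomy a 0 with ha | rfl | ha
  · rcases lt_trichotomy b 0 with hb | rfl | hb
    · rw [if_neg (fun h => absurd h.1 (asymm ha)), if_pos ⟨ha, hb⟩,
        abs_of_neg ha, abs_of_neg hb]; ring
    · simp
    · rw [if_neg (fun h => absurd h.1 (asymm ha)), if_neg (fun h => absurd h.2 (asymm hb)),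
        abs_of_neg ha, abs_of_pos hb]; ring
  · simp
  · rcases lt_trichotomy b 0 with hb | rfl | hb
    · rw [if_neg (fun h => absurd h.2 (asymm hb)), if_neg (fun h => absurd h.1 (asymm ha)),
        abs_of_pos ha, abs_of_neg hb]; ring
    · simp
    · rw [if_pos ⟨ha, hb⟩, abs_of_pos ha, abs_of_pos hb]; ring

lemma rt_kstep (x y : K) : rt (kstep x y) =
    if 0 < rt x ∧ 0 < rt y then rt x * rt y else if rt x < 0 ∧ rt y < 0 then -(rt x * rt y) else 0 := by
  simp only [rt_pos, rt_neg', kstep]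
  split_ifs <;> simp

lemma ent_fmutate (l : List K) (k i j : Fin 4) :
    ent (fmutate l k) i j =
      if i = k ∨ j = k then -(ent l i j) else ent l i j + kstep (ent l i k) (ent l k j) := by
  fin_cases i <;> fin_cases j <;> rfl

lemma ent_fperm (l : List K) (σ : Equiv.Perm (Fin 4)) (i j : Fin 4) :
    ent (fperm l σ) i j = ent l (σ i) (σ j) := by
  fin_cases i <;> fin_cases j <;> rfl

lemma mutate_toRM (l : List K) (k : Fin 4) : mutate (toRM l) k = toRM (fmutate l k) := by
  funext i j
  by_cases h : i = k ∨ j = k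
  · simp [mutate, toRM, ent_fmutate, h]
  · simp only [mutate, toRM, ent_fmutate, if_neg h, map_add, real_step, rt_kstep]

lemma perm_toRM (l : List K) (σ : Equiv.Perm (Fin 4)) :
    permute (toRM l) σ = toRM (fperm l σ) := by
  funext i j
  simp only [permute, toRM, ent_fperm]

def m0 : List K := [⟨0,0⟩, ⟨1,0⟩, ⟨0,0⟩, ⟨0,0⟩, ⟨-1,0⟩, ⟨0,0⟩, ⟨0,1⟩, ⟨0,0⟩, ⟨0,0⟩, ⟨0,-1⟩, ⟨0,0⟩, ⟨1,0⟩, ⟨0,0⟩, ⟨0,0⟩, ⟨-1,0⟩, ⟨0,0⟩]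
def m1 : List K := [⟨0,0⟩, ⟨-1,0⟩, ⟨0,0⟩, ⟨0,0⟩, ⟨1,0⟩, ⟨0,0⟩, ⟨0,1⟩, ⟨0,0⟩, ⟨0,0⟩, ⟨0,-1⟩, ⟨0,0⟩, ⟨1,0⟩, ⟨0,0⟩, ⟨0,0⟩, ⟨-1,0⟩, ⟨0,0⟩]
def m2 : List K := [⟨0,0⟩, ⟨-1,0⟩, ⟨0,1⟩, ⟨0,0⟩, ⟨1,0⟩, ⟨0,0⟩, ⟨0,-1⟩, ⟨0,0⟩, ⟨0,-1⟩, ⟨0,1⟩, ⟨0,0⟩, ⟨1,0⟩, ⟨0,0⟩, ⟨0,0⟩, ⟨-1,0⟩, ⟨0,0⟩]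
def m3 : List K := [⟨0,0⟩, ⟨1,0⟩, ⟨0,0⟩, ⟨0,0⟩, ⟨-1,0⟩, ⟨0,0⟩, ⟨0,-1⟩, ⟨0,1⟩, ⟨0,0⟩, ⟨0,1⟩, ⟨0,0⟩, ⟨-1,0⟩, ⟨0,0⟩, ⟨0,-1⟩, ⟨1,0⟩, ⟨0,0⟩]
def m4 : List K := [⟨0,0⟩, ⟨1,0⟩, ⟨0,0⟩, ⟨0,0⟩, ⟨-1,0⟩, ⟨0,0⟩, ⟨0,1⟩, ⟨0,0⟩, ⟨0,0⟩, ⟨0,-1⟩, ⟨0,0⟩, ⟨-1,0⟩, ⟨0,0⟩, ⟨0,0⟩, ⟨1,0⟩, ⟨0,0⟩]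
def m5 : List K := [⟨0,0⟩, ⟨1,0⟩, ⟨0,0⟩, ⟨0,0⟩, ⟨-1,0⟩, ⟨0,0⟩, ⟨0,-1⟩, ⟨0,0⟩, ⟨0,0⟩, ⟨0,1⟩, ⟨0,0⟩, ⟨1,0⟩, ⟨0,0⟩, ⟨0,0⟩, ⟨-1,0⟩, ⟨0,0⟩]
def m6 : List K := [⟨0,0⟩, ⟨-1,0⟩, ⟨0,0⟩, ⟨0,0⟩, ⟨1,0⟩, ⟨0,0⟩, ⟨0,-1⟩, ⟨0,1⟩, ⟨0,0⟩, ⟨0,1⟩, ⟨0,0⟩, ⟨-1,0⟩, ⟨0,0⟩, ⟨0,-1⟩, ⟨1,0⟩, ⟨0,0⟩]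
def m7 : List K := [⟨0,0⟩, ⟨-1,0⟩, ⟨0,0⟩, ⟨0,0⟩, ⟨1,0⟩, ⟨0,0⟩, ⟨0,1⟩, ⟨0,0⟩, ⟨0,0⟩, ⟨0,-1⟩, ⟨0,0⟩, ⟨-1,0⟩, ⟨0,0⟩, ⟨0,0⟩, ⟨1,0⟩, ⟨0,0⟩]
def m8 : List K := [⟨0,0⟩, ⟨1,0⟩, ⟨0,-1⟩, ⟨0,0⟩, ⟨-1,0⟩, ⟨0,0⟩, ⟨0,0⟩, ⟨0,0⟩, ⟨0,1⟩, ⟨0,0⟩, ⟨0,0⟩, ⟨1,0⟩, ⟨0,0⟩, ⟨0,0⟩, ⟨-1,0⟩, ⟨0,0⟩]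
def m9 : List K := [⟨0,0⟩, ⟨1,0⟩, ⟨0,-1⟩, ⟨0,1⟩, ⟨-1,0⟩, ⟨0,0⟩, ⟨0,1⟩, ⟨0,0⟩, ⟨0,1⟩, ⟨0,-1⟩, ⟨0,0⟩, ⟨-1,0⟩, ⟨0,-1⟩, ⟨0,0⟩, ⟨1,0⟩, ⟨0,0⟩]
def m10 : List K := [⟨0,0⟩, ⟨-1,0⟩, ⟨0,1⟩, ⟨0,0⟩, ⟨1,0⟩, ⟨0,0⟩, ⟨0,-1⟩, ⟨0,0⟩, ⟨0,-1⟩, ⟨0,1⟩, ⟨0,0⟩, ⟨-1,0⟩, ⟨0,0⟩, ⟨0,0⟩, ⟨1,0⟩, ⟨0,0⟩]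
def m11 : List K := [⟨0,0⟩, ⟨-1,0⟩, ⟨0,0⟩, ⟨0,1⟩, ⟨1,0⟩, ⟨0,0⟩, ⟨0,1⟩, ⟨0,-1⟩, ⟨0,0⟩, ⟨0,-1⟩, ⟨0,0⟩, ⟨1,0⟩, ⟨0,-1⟩, ⟨0,1⟩, ⟨-1,0⟩, ⟨0,0⟩]
def m12 : List K := [⟨0,0⟩, ⟨1,0⟩, ⟨0,0⟩, ⟨0,0⟩, ⟨-1,0⟩, ⟨0,0⟩, ⟨0,0⟩, ⟨0,-1⟩, ⟨0,0⟩, ⟨0,0⟩, ⟨0,0⟩, ⟨1,0⟩, ⟨0,0⟩, ⟨0,1⟩, ⟨-1,0⟩, ⟨0,0⟩]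
def m13 : List K := [⟨0,0⟩, ⟨-1,0⟩, ⟨0,0⟩, ⟨0,0⟩, ⟨1,0⟩, ⟨0,0⟩, ⟨0,-1⟩, ⟨0,0⟩, ⟨0,0⟩, ⟨0,1⟩, ⟨0,0⟩, ⟨1,0⟩, ⟨0,0⟩, ⟨0,0⟩, ⟨-1,0⟩, ⟨0,0⟩]
def m14 : List K := [⟨0,0⟩, ⟨1,0⟩, ⟨0,0⟩, ⟨0,0⟩, ⟨-1,0⟩, ⟨0,0⟩, ⟨0,-1⟩, ⟨0,0⟩, ⟨0,0⟩, ⟨0,1⟩, ⟨0,0⟩, ⟨-1,0⟩, ⟨0,0⟩, ⟨0,0⟩, ⟨1,0⟩, ⟨0,0⟩]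
def m15 : List K := [⟨0,0⟩, ⟨1,0⟩, ⟨0,-1⟩, ⟨0,0⟩, ⟨-1,0⟩, ⟨0,0⟩, ⟨0,1⟩, ⟨0,-1⟩, ⟨0,1⟩, ⟨0,-1⟩, ⟨0,0⟩, ⟨1,0⟩, ⟨0,0⟩, ⟨0,1⟩, ⟨-1,0⟩, ⟨0,0⟩]
def m16 : List K := [⟨0,0⟩, ⟨-1,0⟩, ⟨0,0⟩, ⟨0,0⟩, ⟨1,0⟩, ⟨0,0⟩, ⟨0,0⟩, ⟨0,-1⟩, ⟨0,0⟩, ⟨0,0⟩, ⟨0,0⟩, ⟨1,0⟩, ⟨0,0⟩, ⟨0,1⟩, ⟨-1,0⟩, ⟨0,0⟩]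
def m17 : List K := [⟨0,0⟩, ⟨-1,0⟩, ⟨0,-1⟩, ⟨0,0⟩, ⟨1,0⟩, ⟨0,0⟩, ⟨0,0⟩, ⟨0,0⟩, ⟨0,1⟩, ⟨0,0⟩, ⟨0,0⟩, ⟨1,0⟩, ⟨0,0⟩, ⟨0,0⟩, ⟨-1,0⟩, ⟨0,0⟩]
def m18 : List K := [⟨0,0⟩, ⟨1,0⟩, ⟨0,1⟩, ⟨0,0⟩, ⟨-1,0⟩, ⟨0,0⟩, ⟨0,0⟩, ⟨0,0⟩, ⟨0,-1⟩, ⟨0,0⟩, ⟨0,0⟩, ⟨-1,0⟩, ⟨0,0⟩, ⟨0,0⟩, ⟨1,0⟩, ⟨0,0⟩]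
def m19 : List K := [⟨0,0⟩, ⟨1,0⟩, ⟨0,-1⟩, ⟨0,0⟩, ⟨-1,0⟩, ⟨0,0⟩, ⟨0,0⟩, ⟨0,0⟩, ⟨0,1⟩, ⟨0,0⟩, ⟨0,0⟩, ⟨-1,0⟩, ⟨0,0⟩, ⟨0,0⟩, ⟨1,0⟩, ⟨0,0⟩]
def m20 : List K := [⟨0,0⟩, ⟨-1,0⟩, ⟨0,1⟩, ⟨0,-1⟩, ⟨1,0⟩, ⟨0,0⟩, ⟨0,0⟩, ⟨0,0⟩, ⟨0,-1⟩, ⟨0,0⟩, ⟨0,0⟩, ⟨1,0⟩, ⟨0,1⟩, ⟨0,0⟩, ⟨-1,0⟩, ⟨0,0⟩]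
def m21 : List K := [⟨0,0⟩, ⟨-1,0⟩, ⟨0,0⟩, ⟨0,1⟩, ⟨1,0⟩, ⟨0,0⟩, ⟨0,-1⟩, ⟨0,0⟩, ⟨0,0⟩, ⟨0,1⟩, ⟨0,0⟩, ⟨-1,0⟩, ⟨0,-1⟩, ⟨0,0⟩, ⟨1,0⟩, ⟨0,0⟩]
def m22 : List K := [⟨0,0⟩, ⟨1,0⟩, ⟨0,0⟩, ⟨0,-1⟩, ⟨-1,0⟩, ⟨0,0⟩, ⟨0,1⟩, ⟨0,0⟩, ⟨0,0⟩, ⟨0,-1⟩, ⟨0,0⟩, ⟨1,0⟩, ⟨0,1⟩, ⟨0,0⟩, ⟨-1,0⟩, ⟨0,0⟩]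
def m23 : List K := [⟨0,0⟩, ⟨1,0⟩, ⟨0,0⟩, ⟨0,-1⟩, ⟨-1,0⟩, ⟨0,0⟩, ⟨0,0⟩, ⟨0,1⟩, ⟨0,0⟩, ⟨0,0⟩, ⟨0,0⟩, ⟨-1,0⟩, ⟨0,1⟩, ⟨0,-1⟩, ⟨1,0⟩, ⟨0,0⟩]
def m24 : List K := [⟨0,0⟩, ⟨-1,0⟩, ⟨0,0⟩, ⟨0,0⟩, ⟨1,0⟩, ⟨0,0⟩, ⟨0,0⟩, ⟨0,1⟩, ⟨0,0⟩, ⟨0,0⟩, ⟨0,0⟩, ⟨1,0⟩, ⟨0,0⟩, ⟨0,-1⟩, ⟨-1,0⟩, ⟨0,0⟩]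
def m25 : List K := [⟨0,0⟩, ⟨1,0⟩, ⟨0,0⟩, ⟨0,0⟩, ⟨-1,0⟩, ⟨0,0⟩, ⟨0,0⟩, ⟨0,-1⟩, ⟨0,0⟩, ⟨0,0⟩, ⟨0,0⟩, ⟨-1,0⟩, ⟨0,0⟩, ⟨0,1⟩, ⟨1,0⟩, ⟨0,0⟩]
def m26 : List K := [⟨0,0⟩, ⟨1,0⟩, ⟨0,-1⟩, ⟨0,0⟩, ⟨-1,0⟩, ⟨0,0⟩, ⟨0,1⟩, ⟨0,0⟩, ⟨0,1⟩, ⟨0,-1⟩, ⟨0,0⟩, ⟨1,0⟩, ⟨0,0⟩, ⟨0,0⟩, ⟨-1,0⟩, ⟨0,0⟩]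
def m27 : List K := [⟨0,0⟩, ⟨-1,0⟩, ⟨0,0⟩, ⟨0,0⟩, ⟨1,0⟩, ⟨0,0⟩, ⟨0,-1⟩, ⟨0,0⟩, ⟨0,0⟩, ⟨0,1⟩, ⟨0,0⟩, ⟨-1,0⟩, ⟨0,0⟩, ⟨0,0⟩, ⟨1,0⟩, ⟨0,0⟩]
def m28 : List K := [⟨0,0⟩, ⟨1,0⟩, ⟨0,0⟩, ⟨0,0⟩, ⟨-1,0⟩, ⟨0,0⟩, ⟨0,1⟩, ⟨0,-1⟩, ⟨0,0⟩, ⟨0,-1⟩, ⟨0,0⟩, ⟨1,0⟩, ⟨0,0⟩, ⟨0,1⟩, ⟨-1,0⟩, ⟨0,0⟩]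
def m29 : List K := [⟨0,0⟩, ⟨-1,0⟩, ⟨0,1⟩, ⟨0,0⟩, ⟨1,0⟩, ⟨0,0⟩, ⟨0,0⟩, ⟨0,-1⟩, ⟨0,-1⟩, ⟨0,0⟩, ⟨0,0⟩, ⟨1,0⟩, ⟨0,0⟩, ⟨0,1⟩, ⟨-1,0⟩, ⟨0,0⟩]
def m30 : List K := [⟨0,0⟩, ⟨1,0⟩, ⟨0,-1⟩, ⟨0,0⟩, ⟨-1,0⟩, ⟨0,0⟩, ⟨0,0⟩, ⟨0,1⟩, ⟨0,1⟩, ⟨0,0⟩, ⟨0,0⟩, ⟨-1,0⟩, ⟨0,0⟩, ⟨0,-1⟩, ⟨1,0⟩, ⟨0,0⟩]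
def m31 : List K := [⟨0,0⟩, ⟨1,0⟩, ⟨0,0⟩, ⟨0,-1⟩, ⟨-1,0⟩, ⟨0,0⟩, ⟨0,0⟩, ⟨0,1⟩, ⟨0,0⟩, ⟨0,0⟩, ⟨0,0⟩, ⟨1,0⟩, ⟨0,1⟩, ⟨0,-1⟩, ⟨-1,0⟩, ⟨0,0⟩]
def m32 : List K := [⟨0,0⟩, ⟨-1,0⟩, ⟨0,0⟩, ⟨0,0⟩, ⟨1,0⟩, ⟨0,0⟩, ⟨0,0⟩, ⟨0,-1⟩, ⟨0,0⟩, ⟨0,0⟩, ⟨0,0⟩, ⟨-1,0⟩, ⟨0,0⟩, ⟨0,1⟩, ⟨1,0⟩, ⟨0,0⟩]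
def m33 : List K := [⟨0,0⟩, ⟨1,0⟩, ⟨0,1⟩, ⟨0,0⟩, ⟨-1,0⟩, ⟨0,0⟩, ⟨0,0⟩, ⟨0,0⟩, ⟨0,-1⟩, ⟨0,0⟩, ⟨0,0⟩, ⟨1,0⟩, ⟨0,0⟩, ⟨0,0⟩, ⟨-1,0⟩, ⟨0,0⟩]
def m34 : List K := [⟨0,0⟩, ⟨-1,0⟩, ⟨0,1⟩, ⟨0,0⟩, ⟨1,0⟩, ⟨0,0⟩, ⟨0,0⟩, ⟨0,0⟩, ⟨0,-1⟩, ⟨0,0⟩, ⟨0,0⟩, ⟨-1,0⟩, ⟨0,0⟩, ⟨0,0⟩, ⟨1,0⟩, ⟨0,0⟩]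
def m35 : List K := [⟨0,0⟩, ⟨-1,0⟩, ⟨0,-1⟩, ⟨0,0⟩, ⟨1,0⟩, ⟨0,0⟩, ⟨0,0⟩, ⟨0,0⟩, ⟨0,1⟩, ⟨0,0⟩, ⟨0,0⟩, ⟨-1,0⟩, ⟨0,0⟩, ⟨0,0⟩, ⟨1,0⟩, ⟨0,0⟩]
def m36 : List K := [⟨0,0⟩, ⟨1,0⟩, ⟨0,1⟩, ⟨0,-1⟩, ⟨-1,0⟩, ⟨0,0⟩, ⟨0,0⟩, ⟨0,0⟩, ⟨0,-1⟩, ⟨0,0⟩, ⟨0,0⟩, ⟨1,0⟩, ⟨0,1⟩, ⟨0,0⟩, ⟨-1,0⟩, ⟨0,0⟩]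
def m37 : List K := [⟨0,0⟩, ⟨-1,0⟩, ⟨0,0⟩, ⟨0,1⟩, ⟨1,0⟩, ⟨0,0⟩, ⟨0,0⟩, ⟨0,0⟩, ⟨0,0⟩, ⟨0,0⟩, ⟨0,0⟩, ⟨-1,0⟩, ⟨0,-1⟩, ⟨0,0⟩, ⟨1,0⟩, ⟨0,0⟩]
def m38 : List K := [⟨0,0⟩, ⟨1,0⟩, ⟨0,0⟩, ⟨0,-1⟩, ⟨-1,0⟩, ⟨0,0⟩, ⟨0,-1⟩, ⟨0,1⟩, ⟨0,0⟩, ⟨0,1⟩, ⟨0,0⟩, ⟨-1,0⟩, ⟨0,1⟩, ⟨0,-1⟩, ⟨1,0⟩, ⟨0,0⟩]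
def m39 : List K := [⟨0,0⟩, ⟨-1,0⟩, ⟨0,1⟩, ⟨0,-1⟩, ⟨1,0⟩, ⟨0,0⟩, ⟨0,-1⟩, ⟨0,0⟩, ⟨0,-1⟩, ⟨0,1⟩, ⟨0,0⟩, ⟨1,0⟩, ⟨0,1⟩, ⟨0,0⟩, ⟨-1,0⟩, ⟨0,0⟩]
def m40 : List K := [⟨0,0⟩, ⟨1,0⟩, ⟨0,0⟩, ⟨0,0⟩, ⟨-1,0⟩, ⟨0,0⟩, ⟨0,0⟩, ⟨0,1⟩, ⟨0,0⟩, ⟨0,0⟩, ⟨0,0⟩, ⟨1,0⟩, ⟨0,0⟩, ⟨0,-1⟩, ⟨-1,0⟩, ⟨0,0⟩]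
def m41 : List K := [⟨0,0⟩, ⟨-1,0⟩, ⟨0,0⟩, ⟨0,0⟩, ⟨1,0⟩, ⟨0,0⟩, ⟨0,0⟩, ⟨0,1⟩, ⟨0,0⟩, ⟨0,0⟩, ⟨0,0⟩, ⟨-1,0⟩, ⟨0,0⟩, ⟨0,-1⟩, ⟨1,0⟩, ⟨0,0⟩]
def m42 : List K := [⟨0,0⟩, ⟨-1,0⟩, ⟨0,1⟩, ⟨0,0⟩, ⟨1,0⟩, ⟨0,0⟩, ⟨0,0⟩, ⟨0,0⟩, ⟨0,-1⟩, ⟨0,0⟩, ⟨0,0⟩, ⟨1,0⟩, ⟨0,0⟩, ⟨0,0⟩, ⟨-1,0⟩, ⟨0,0⟩]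
def m43 : List K := [⟨0,0⟩, ⟨-1,0⟩, ⟨0,1⟩, ⟨0,0⟩, ⟨1,0⟩, ⟨0,0⟩, ⟨0,-1⟩, ⟨0,1⟩, ⟨0,-1⟩, ⟨0,1⟩, ⟨0,0⟩, ⟨-1,0⟩, ⟨0,0⟩, ⟨0,-1⟩, ⟨1,0⟩, ⟨0,0⟩]
def m44 : List K := [⟨0,0⟩, ⟨1,0⟩, ⟨0,-1⟩, ⟨0,0⟩, ⟨-1,0⟩, ⟨0,0⟩, ⟨0,1⟩, ⟨0,0⟩, ⟨0,1⟩, ⟨0,-1⟩, ⟨0,0⟩, ⟨-1,0⟩, ⟨0,0⟩, ⟨0,0⟩, ⟨1,0⟩, ⟨0,0⟩]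
def m45 : List K := [⟨0,0⟩, ⟨-1,0⟩, ⟨0,0⟩, ⟨0,0⟩, ⟨1,0⟩, ⟨0,0⟩, ⟨0,1⟩, ⟨0,-1⟩, ⟨0,0⟩, ⟨0,-1⟩, ⟨0,0⟩, ⟨1,0⟩, ⟨0,0⟩, ⟨0,1⟩, ⟨-1,0⟩, ⟨0,0⟩]
def m46 : List K := [⟨0,0⟩, ⟨1,0⟩, ⟨0,0⟩, ⟨0,0⟩, ⟨-1,0⟩, ⟨0,0⟩, ⟨0,0⟩, ⟨0,1⟩, ⟨0,0⟩, ⟨0,0⟩, ⟨0,0⟩, ⟨-1,0⟩, ⟨0,0⟩, ⟨0,-1⟩, ⟨1,0⟩, ⟨0,0⟩]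
def m47 : List K := [⟨0,0⟩, ⟨1,0⟩, ⟨0,1⟩, ⟨0,-1⟩, ⟨-1,0⟩, ⟨0,0⟩, ⟨0,0⟩, ⟨0,1⟩, ⟨0,-1⟩, ⟨0,0⟩, ⟨0,0⟩, ⟨1,0⟩, ⟨0,1⟩, ⟨0,-1⟩, ⟨-1,0⟩, ⟨0,0⟩]
def m48 : List K := [⟨0,0⟩, ⟨-1,0⟩, ⟨0,-1⟩, ⟨0,1⟩, ⟨1,0⟩, ⟨0,0⟩, ⟨0,0⟩, ⟨0,-1⟩, ⟨0,1⟩, ⟨0,0⟩, ⟨0,0⟩, ⟨-1,0⟩, ⟨0,-1⟩, ⟨0,1⟩, ⟨1,0⟩, ⟨0,0⟩]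
def m49 : List K := [⟨0,0⟩, ⟨-1,0⟩, ⟨0,0⟩, ⟨0,1⟩, ⟨1,0⟩, ⟨0,0⟩, ⟨0,0⟩, ⟨0,0⟩, ⟨0,0⟩, ⟨0,0⟩, ⟨0,0⟩, ⟨1,0⟩, ⟨0,-1⟩, ⟨0,0⟩, ⟨-1,0⟩, ⟨0,0⟩]
def m50 : List K := [⟨0,0⟩, ⟨1,0⟩, ⟨0,-1⟩, ⟨0,1⟩, ⟨-1,0⟩, ⟨0,0⟩, ⟨0,0⟩, ⟨0,0⟩, ⟨0,1⟩, ⟨0,0⟩, ⟨0,0⟩, ⟨-1,0⟩, ⟨0,-1⟩, ⟨0,0⟩, ⟨1,0⟩, ⟨0,0⟩]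
def m51 : List K := [⟨0,0⟩, ⟨1,0⟩, ⟨0,0⟩, ⟨0,1⟩, ⟨-1,0⟩, ⟨0,0⟩, ⟨0,0⟩, ⟨0,0⟩, ⟨0,0⟩, ⟨0,0⟩, ⟨0,0⟩, ⟨-1,0⟩, ⟨0,-1⟩, ⟨0,0⟩, ⟨1,0⟩, ⟨0,0⟩]
def m52 : List K := [⟨0,0⟩, ⟨-1,0⟩, ⟨0,0⟩, ⟨0,1⟩, ⟨1,0⟩, ⟨0,0⟩, ⟨0,0⟩, ⟨0,-1⟩, ⟨0,0⟩, ⟨0,0⟩, ⟨0,0⟩, ⟨1,0⟩, ⟨0,-1⟩, ⟨0,1⟩, ⟨-1,0⟩, ⟨0,0⟩]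
def m53 : List K := [⟨0,0⟩, ⟨-1,0⟩, ⟨0,-1⟩, ⟨0,1⟩, ⟨1,0⟩, ⟨0,0⟩, ⟨0,0⟩, ⟨0,0⟩, ⟨0,1⟩, ⟨0,0⟩, ⟨0,0⟩, ⟨-1,0⟩, ⟨0,-1⟩, ⟨0,0⟩, ⟨1,0⟩, ⟨0,0⟩]
def m54 : List K := [⟨0,0⟩, ⟨-1,0⟩, ⟨0,0⟩, ⟨0,1⟩, ⟨1,0⟩, ⟨0,0⟩, ⟨0,0⟩, ⟨0,-1⟩, ⟨0,0⟩, ⟨0,0⟩, ⟨0,0⟩, ⟨-1,0⟩, ⟨0,-1⟩, ⟨0,1⟩, ⟨1,0⟩, ⟨0,0⟩]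
def m55 : List K := [⟨0,0⟩, ⟨1,0⟩, ⟨0,0⟩, ⟨0,1⟩, ⟨-1,0⟩, ⟨0,0⟩, ⟨0,0⟩, ⟨0,0⟩, ⟨0,0⟩, ⟨0,0⟩, ⟨0,0⟩, ⟨1,0⟩, ⟨0,-1⟩, ⟨0,0⟩, ⟨-1,0⟩, ⟨0,0⟩]
def m56 : List K := [⟨0,0⟩, ⟨-1,0⟩, ⟨0,0⟩, ⟨0,-1⟩, ⟨1,0⟩, ⟨0,0⟩, ⟨0,0⟩, ⟨0,0⟩, ⟨0,0⟩, ⟨0,0⟩, ⟨0,0⟩, ⟨-1,0⟩, ⟨0,1⟩, ⟨0,0⟩, ⟨1,0⟩, ⟨0,0⟩]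
def m57 : List K := [⟨0,0⟩, ⟨1,0⟩, ⟨0,0⟩, ⟨0,-1⟩, ⟨-1,0⟩, ⟨0,0⟩, ⟨0,0⟩, ⟨0,0⟩, ⟨0,0⟩, ⟨0,0⟩, ⟨0,0⟩, ⟨1,0⟩, ⟨0,1⟩, ⟨0,0⟩, ⟨-1,0⟩, ⟨0,0⟩]
def m58 : List K := [⟨0,0⟩, ⟨-1,0⟩, ⟨0,0⟩, ⟨0,-1⟩, ⟨1,0⟩, ⟨0,0⟩, ⟨0,0⟩, ⟨0,0⟩, ⟨0,0⟩, ⟨0,0⟩, ⟨0,0⟩, ⟨1,0⟩, ⟨0,1⟩, ⟨0,0⟩, ⟨-1,0⟩, ⟨0,0⟩]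
def m59 : List K := [⟨0,0⟩, ⟨1,0⟩, ⟨0,0⟩, ⟨0,-1⟩, ⟨-1,0⟩, ⟨0,0⟩, ⟨0,0⟩, ⟨0,0⟩, ⟨0,0⟩, ⟨0,0⟩, ⟨0,0⟩, ⟨-1,0⟩, ⟨0,1⟩, ⟨0,0⟩, ⟨1,0⟩, ⟨0,0⟩]
def zLf : List (List K) := [m0, m1, m2, m3, m4, m5, m6, m7, m8, m9, m10, m11, m12, m13, m14, m15, m16, m17, m18, m19, m20, m21, m22, m23, m24, m25, m26, m27, m28, m29, m30, m31, m32, m33, m34, m35, m36, m37, m38, m39, m40, m41, m42, m43, m44, m45, m46, m47, m48, m49, m50, m51, m52, m53, m54, m55, m56, m57, m58, m59]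
def zRf : List (List K) := [m0, m1, m2, m3, m4, m5, m9, m21]

set_option maxRecDepth 10000 in
theorem hclosed : ∀ l ∈ zLf, ∀ k : Fin 4, fmutate l k ∈ zLf := by decide

set_option maxRecDepth 10000 in
theorem hcover : ∀ l ∈ zLf, ∃ r ∈ zRf, ∃ σ : Equiv.Perm (Fin 4), l = fperm r σ := by decide

set_option maxRecDepth 10000 in
theorem hsep : ∀ r ∈ zRf, ∀ r' ∈ zRf, ∀ σ : Equiv.Perm (Fin 4),
    (∀ i j, ent r' i j = ent r (σ i) (σ j)) → r = r' := by decide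

set_option maxRecDepth 10000 in
theorem hext : ∀ r ∈ zRf, ∀ r' ∈ zRf, (∀ i j, ent r i j = ent r' i j) → r = r' := by decide

theorem hnodup : zRf.Nodup := by decide

lemma hF4 : F4 = toRM m0 := by
  have e00 : ent m0 0 0 = (⟨0,0⟩ : K) := rfl
  have e01 : ent m0 0 1 = (⟨1,0⟩ : K) := rfl
  have e02 : ent m0 0 2 = (⟨0,0⟩ : K) := rfl
  have e03 : ent m0 0 3 = (⟨0,0⟩ : K) := rfl
  have e10 : ent m0 1 0 = (⟨-1,0⟩ : K) := rfl
  have e11 : ent m0 1 1 = (⟨0,0⟩ : K) := rfl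
  have e12 : ent m0 1 2 = (⟨0,1⟩ : K) := rfl
  have e13 : ent m0 1 3 = (⟨0,0⟩ : K) := rfl
  have e20 : ent m0 2 0 = (⟨0,0⟩ : K) := rfl
  have e21 : ent m0 2 1 = (⟨0,-1⟩ : K) := rfl
  have e22 : ent m0 2 2 = (⟨0,0⟩ : K) := rfl
  have e23 : ent m0 2 3 = (⟨1,0⟩ : K) := rfl
  have e30 : ent m0 3 0 = (⟨0,0⟩ : K) := rfl
  have e31 : ent m0 3 1 = (⟨0,0⟩ : K) := rfl
  have e32 : ent m0 3 2 = (⟨-1,0⟩ : K) := rfl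
  have e33 : ent m0 3 3 = (⟨0,0⟩ : K) := rfl
  funext i j
  fin_cases i <;> fin_cases j <;>
    simp [F4, toRM, Matrix.vecHead, Matrix.vecTail, e00, e01, e02, e03, e10, e11, e12, e13, e20, e21, e22, e23, e30, e31, e32, e33, rt_apply] <;> push_cast <;> ring

lemma reach_fold (P : List K) (s : List (Fin 4)) :
    Reachable (toRM P) (toRM (s.foldl fmutate P)) := by
  induction s generalizing P with
  | nil => exact Relation.ReflTransGen.refl
  | cons k ks ih =>
    exact Relation.ReflTransGen.head ⟨k, (mutate_toRM P k).symm⟩ (ih (fmutate P k))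

lemma reach_mem : ∀ C, Reachable F4 C → ∃ l ∈ zLf, C = toRM l := by
  intro C h
  induction h with
  | refl => exact ⟨m0, by decide, hF4⟩
  | tail _ hstep ih =>
    obtain ⟨l, hl, rfl⟩ := ih
    obtain ⟨k, rfl⟩ := hstep
    exact ⟨fmutate l k, hclosed l hl k, mutate_toRM l k⟩

lemma reach_reps : ∀ r ∈ zRf, Reachable F4 (toRM r) := by
  have H : ∀ s : List (Fin 4), Reachable F4 (toRM (s.foldl fmutate m0)) :=
    fun s => hF4 ▸ reach_fold m0 s
  intro r hr
  fin_cases hr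
  · exact (by decide : List.foldl fmutate m0 [] = m0) ▸ H []
  · exact (by decide : List.foldl fmutate m0 [0] = m1) ▸ H [0]
  · exact (by decide : List.foldl fmutate m0 [1] = m2) ▸ H [1]
  · exact (by decide : List.foldl fmutate m0 [2] = m3) ▸ H [2]
  · exact (by decide : List.foldl fmutate m0 [3] = m4) ▸ H [3]
  · exact (by decide : List.foldl fmutate m0 [0, 1] = m5) ▸ H [0, 1]
  · exact (by decide : List.foldl fmutate m0 [1, 2] = m9) ▸ H [1, 2]
  · exact (by decide : List.foldl fmutate m0 [1, 2, 1] = m21) ▸ H [1, 2, 1]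

/-- The mutation class of `F₄` consists of exactly 8 quivers up to simultaneous
permutation of the indices; in particular `F₄` is mutation-finite. -/
theorem F4_mutation_class :
    MutationFinite F4 ∧
    ∃ R : Finset (Matrix (Fin 4) (Fin 4) ℝ),
      R.card = 8 ∧
      (∀ D ∈ R, Reachable F4 D) ∧
      (∀ C, Reachable F4 C → ∃ D ∈ R, ∃ σ : Equiv.Perm (Fin 4), C = permute D σ) ∧
      (∀ D ∈ R, ∀ D' ∈ R, (∃ σ : Equiv.Perm (Fin 4), D' = permute D σ) → D = D') := by

  have hinjR : ∀ x ∈ zRf, ∀ y ∈ zRf, toRM x = toRM y → x = y := fun x hx y hy h =>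
    hext x hx y hy fun i j => rt_injective (congrFun (congrFun h i) j)
  constructor
  · exact Set.Finite.subset ((zLf.map toRM).toFinset : Finset _).finite_toSet
      (fun C hC => by
        obtain ⟨l, hl, rfl⟩ := reach_mem C hC
        simp only [Finset.coe_sort_coe, List.coe_toFinset, List.mem_map, Set.mem_setOf_eq,
          Finset.mem_coe, List.mem_toFinset]
        exact ⟨l, hl, rfl⟩)
  · refine ⟨(zRf.map toRM).toFinset, ?_, ?_, ?_, ?_⟩
    · rw [List.toFinset_card_of_nodup (hnodup.map_on hinjR)]
      simp [zRf]
    · intro D hD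
      rw [List.mem_toFinset, List.mem_map] at hD
      obtain ⟨r, hr, rfl⟩ := hD
      exact reach_reps r hr
    · intro C hC
      obtain ⟨l, hl, rfl⟩ := reach_mem C hC
      obtain ⟨r, hr, σ, hls⟩ := hcover l hl
      refine ⟨toRM r, ?_, σ, ?_⟩
      · rw [List.mem_toFinset, List.mem_map]; exact ⟨r, hr, rfl⟩
      · rw [hls, perm_toRM]
    · rintro D hD D' hD' ⟨σ, hσ⟩
      rw [List.mem_toFinset, List.mem_map] at hD hD'
      obtain ⟨r, hr, rfl⟩ := hD
      obtain ⟨r', hr', rfl⟩ := hD'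
      rw [perm_toRM] at hσ
      have hpt : ∀ i j, ent r' i j = ent r (σ i) (σ j) := fun i j => by
        have := congrFun (congrFun hσ i) j
        exact (ent_fperm r σ i j) ▸ rt_injective this
      exact congrArg toRM (hsep r hr r' hr' σ hpt)


end RealQuiver
end
end
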